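/- arXiv:2306.12415 — 12 statements merged into one kernel-verified Lean document; each statement's English description precedes it below -/
import Mathlib

section
/- Let G and H be finite groups whose orders have the same prime factors, and let α : G →* MulAut H be an action of G on H by automorphisms. If a, b ∈ H are such that the cardinalities of the orbits O(a) and O(b) are coprime, then Stab(a)·Stab(b) = G (every element of G is a product of an element stabilizing a and an element stabilizing b), and the pointwise product of sets O(a)·O(b) equals the orbit O(ab). -/
open Pointwise

noncomputable def quotMapAux {G : Type*} [Group G] (A B : Subgroup G) :
    A ⧸ B.subgroupOf A → G ⧸ B :=
  Quotient.map' Subtype.val (fun x y h => by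
    rw [QuotientGroup.leftRel_apply] at h ⊢
    simpa [Subgroup.mem_subgroupOf] using h)

-- image of A in G ⧸ B has card = B.relindex A
lemma aux_card_image {G : Type*} [Group G] (A B : Subgroup G) :
    Nat.card ((↑A : Set G).image ((↑) : G → G ⧸ B) : Set (G ⧸ B)) = B.relIndex A := by
  have heq : ((↑A : Set G).image ((↑) : G → G ⧸ B)) = Set.range (quotMapAux A B) := by
    ext x
    constructor
    · rintro ⟨g, hg, rfl⟩
      exact ⟨QuotientGroup.mk (⟨g, hg⟩ : A), rfl⟩
    · rintro ⟨q, rfl⟩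
      induction q using Quotient.inductionOn' with
      | h g => exact ⟨g, g.2, rfl⟩
  have hinj : Function.Injective (quotMapAux A B) := by
    intro q₁ q₂ h
    induction q₁ using Quotient.inductionOn' with
    | h x =>
      induction q₂ using Quotient.inductionOn' with
      | h y =>
        simp only [quotMapAux, Quotient.map'_mk''] at h
        apply Quotient.sound'
        rw [QuotientGroup.leftRel_apply]
        have := QuotientGroup.leftRel_apply.mp (Quotient.exact' h)
        simpa [Subgroup.mem_subgroupOf] using this
  rw [heq, Nat.card_range_of_injective hinj]
  rfl

lemma aux_mul_eq_univ {G : Type*} [Group G] [Finite G] (A B : Subgroup G)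
    (hco : Nat.Coprime A.index B.index) :
    (↑A : Set G) * (↑B : Set G) = Set.univ := by
  have hm : A.index ≠ 0 := Subgroup.index_ne_zero_of_finite
  have hdvd1 : A.index ∣ (A ⊓ B).index := Subgroup.index_dvd_of_le inf_le_left
  have hdvd2 : B.index ∣ (A ⊓ B).index := Subgroup.index_dvd_of_le inf_le_right
  have hdvd : A.index * B.index ∣ (A ⊓ B).index := hco.mul_dvd_of_dvd_of_dvd hdvd1 hdvd2
  have hle : (A ⊓ B).index ≤ A.index * B.index := Subgroup.index_inf_le
  have hk0 : (A ⊓ B).index ≠ 0 := Subgroup.index_ne_zero_of_finite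
  have hk : (A ⊓ B).index = A.index * B.index :=
    Nat.le_antisymm hle (Nat.le_of_dvd (Nat.pos_of_ne_zero hk0) hdvd)
  have hrel : B.relIndex A * A.index = A.index * B.index := by
    rw [← Subgroup.inf_relIndex_left, Subgroup.relIndex_mul_index inf_le_left, hk]
  rw [mul_comm (B.relIndex A)] at hrel
  have hrel' : B.relIndex A = B.index :=
    Nat.eq_of_mul_eq_mul_left (Nat.pos_of_ne_zero hm) hrel
  have hcard : Nat.card ((↑A : Set G) * (↑B : Set G) : Set G) = Nat.card G := by
    rw [Subgroup.card_mul_eq_card_subgroup_mul_card_quotient B (↑A : Set G),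
      aux_card_image A B, hrel', Subgroup.card_mul_index]
  exact Set.eq_of_subset_of_ncard_le (Set.subset_univ _)
    (by rw [Set.ncard_univ, ← Nat.card_coe_set_eq, hcard]) (Set.toFinite _)

/-- The orbit of `a : H` under the action of `G` on `H` via `α`. -/
def orbitOf {G H : Type*} [Group G] [Group H] (α : G →* MulAut H) (a : H) : Set H :=
  Set.range fun g : G => α g a

theorem stmt_0 {G H : Type*} [Group G] [Group H] [Finite G] [Finite H]
    (α : G →* MulAut H)
    (hpf : ∀ p : ℕ, p.Prime → (p ∣ Nat.card G ↔ p ∣ Nat.card H))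
    (a b : H)
    (hco : Nat.Coprime (orbitOf α a).ncard (orbitOf α b).ncard) :
    (∀ g : G, ∃ s t : G, α s a = a ∧ α t b = b ∧ g = s * t) ∧
    orbitOf α a * orbitOf α b = orbitOf α (a * b) := by
  letI : MulAction G H := MulAction.compHom H α
  have horb : ∀ c : H, orbitOf α c = MulAction.orbit G c := fun c => rfl
  have hidx : Nat.Coprime (MulAction.stabilizer G a).index
      (MulAction.stabilizer G b).index := by
    rw [MulAction.index_stabilizer, MulAction.index_stabilizer, ← horb, ← horb]
    exact hco
  have key := aux_mul_eq_univ _ _ hidx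
  have hst : ∀ g : G, ∃ s t : G, α s a = a ∧ α t b = b ∧ g = s * t := by
    intro g
    have hmem : g ∈ (↑(MulAction.stabilizer G a) : Set G) *
        (↑(MulAction.stabilizer G b) : Set G) := key ▸ Set.mem_univ g
    obtain ⟨s, hs, t, ht, rfl⟩ := Set.mem_mul.mp hmem
    exact ⟨s, t, hs, ht, rfl⟩
  refine ⟨hst, ?_⟩
  ext x
  constructor
  · rintro ⟨-, ⟨g, rfl⟩, -, ⟨h, rfl⟩, rfl⟩
    obtain ⟨s, t, hs, ht, hgh⟩ := hst (g⁻¹ * h)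
    have hk : g * s = h * t⁻¹ := by
      have h' : g * (s * t) = h := by rw [← hgh]; group
      rw [← h']; group
    have h1 : α (g * s) a = α g a := by rw [map_mul, MulAut.mul_apply, hs]
    have ht' : α t⁻¹ b = b := by
      conv_lhs => rw [← ht]
      rw [← MulAut.mul_apply, ← map_mul, inv_mul_cancel, map_one, MulAut.one_apply]
    have h2 : α (g * s) b = α h b := by rw [hk, map_mul, MulAut.mul_apply, ht']
    exact ⟨g * s, by simp only []; rw [map_mul (α (g * s)) a b, h1, h2]⟩
  · rintro ⟨g, rfl⟩
    exact ⟨α g a, ⟨g, rfl⟩, α g b, ⟨g, rfl⟩, (map_mul (α g) a b).symm⟩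
end

section
/- Let G and H be finite groups whose orders have the same prime factors, and let α : G →* MulAut H be an action by automorphisms. Let L₁ = O(a) and L₂ = O(b) be non-trivial orbits with |L₂| > |L₁|, such that gcd(|L₁|,|L₂|) = 1 and no non-trivial orbit L₃ satisfies both gcd(|L₃|,|L₁|) > 1 and gcd(|L₃|,|L₂|) > 1 (i.e. L₁ and L₂ are at distance at least 3 in the common divisor graph). Then L₂·L₁⁻¹ is an orbit, namely L₂·L₁⁻¹ = O(b a⁻¹), and |L₂·L₁⁻¹| = |L₂|. -/
open Pointwise

theorem stmt_1 {G H : Type*} [Group G] [Group H] [Finite G] [Finite H]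
    (α : G →* MulAut H)
    (hpf : ∀ p : ℕ, p.Prime → (p ∣ Nat.card G ↔ p ∣ Nat.card H))
    (a b : H)
    (ha : 1 < (orbitOf α a).ncard) (hb : 1 < (orbitOf α b).ncard)
    (hlt : (orbitOf α a).ncard < (orbitOf α b).ncard)
    (hco : Nat.gcd (orbitOf α a).ncard (orbitOf α b).ncard = 1)
    (hdist : ∀ c : H, 1 < (orbitOf α c).ncard →
      ¬(1 < Nat.gcd (orbitOf α c).ncard (orbitOf α a).ncard ∧
        1 < Nat.gcd (orbitOf α c).ncard (orbitOf α b).ncard)) :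
    orbitOf α b * (orbitOf α a)⁻¹ = orbitOf α (b * a⁻¹) ∧
    (orbitOf α b * (orbitOf α a)⁻¹).ncard = (orbitOf α b).ncard := by
  classical
  letI : MulAction G H := MulAction.compHom H α
  have horb : ∀ c : H, MulAction.orbit G c = orbitOf α c := fun c => rfl
  set S := MulAction.stabilizer G a with hSdef
  set T := MulAction.stabilizer G b with hTdef
  have hSa : S.index = (orbitOf α a).ncard := by
    rw [hSdef, MulAction.index_stabilizer, horb]
  have hTb : T.index = (orbitOf α b).ncard := by
    rw [hTdef, MulAction.index_stabilizer, horb]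
  have hcop : Nat.Coprime S.index T.index := by
    rw [Nat.Coprime, hSa, hTb]; exact hco
  -- index of the intersection
  have hST : (S ⊓ T).index = S.index * T.index := by
    have d1 : S.index ∣ (S ⊓ T).index := Subgroup.index_dvd_of_le inf_le_left
    have d2 : T.index ∣ (S ⊓ T).index := Subgroup.index_dvd_of_le inf_le_right
    have dmul : S.index * T.index ∣ (S ⊓ T).index := hcop.mul_dvd_of_dvd_of_dvd d1 d2
    have hle : (S ⊓ T).index ≤ S.index * T.index := Subgroup.index_inf_le
    have hne : (S ⊓ T).index ≠ 0 := Subgroup.index_ne_zero_of_finite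
    exact le_antisymm hle (Nat.le_of_dvd (Nat.pos_of_ne_zero hne) dmul)
  -- the natural map to the product of quotients
  let φ : G ⧸ (S ⊓ T) → (G ⧸ S) × (G ⧸ T) := fun q =>
    Quotient.liftOn' q (fun g => (QuotientGroup.mk g, QuotientGroup.mk g)) (by
      intro x y h
      rw [QuotientGroup.leftRel_apply] at h
      obtain ⟨h1, h2⟩ := Subgroup.mem_inf.mp h
      exact Prod.ext (QuotientGroup.eq.mpr h1) (QuotientGroup.eq.mpr h2))
  have hφmk : ∀ g : G, φ (QuotientGroup.mk g) = (QuotientGroup.mk g, QuotientGroup.mk g) :=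
    fun g => rfl
  have hφinj : Function.Injective φ := by
    intro q q'
    refine Quotient.inductionOn₂' q q' ?_
    intro x y hxy
    rw [hφmk, hφmk] at hxy
    have h1 : x⁻¹ * y ∈ S := QuotientGroup.eq.mp (congrArg Prod.fst hxy)
    have h2 : x⁻¹ * y ∈ T := QuotientGroup.eq.mp (congrArg Prod.snd hxy)
    exact QuotientGroup.eq.mpr (Subgroup.mem_inf.mpr ⟨h1, h2⟩)
  have hφbij : Function.Bijective φ := by
    refine (Nat.bijective_iff_injective_and_card φ).mpr ⟨hφinj, ?_⟩
    rw [Nat.card_prod, ← Subgroup.index_eq_card, ← Subgroup.index_eq_card,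
      ← Subgroup.index_eq_card, hST]
  -- key: any pair of cosets is simultaneously realized
  have hkey : ∀ g h : G, ∃ k : G, α k a = α h a ∧ α k b = α g b := by
    intro g h
    obtain ⟨q, hq⟩ := hφbij.2 (QuotientGroup.mk h, QuotientGroup.mk g)
    obtain ⟨k, rfl⟩ := QuotientGroup.mk_surjective q
    rw [hφmk] at hq
    have h1 : k⁻¹ * h ∈ S := QuotientGroup.eq.mp (congrArg Prod.fst hq)
    have h2 : k⁻¹ * g ∈ T := QuotientGroup.eq.mp (congrArg Prod.snd hq)
    have e1 : α (k⁻¹ * h) a = a := h1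
    have e2 : α (k⁻¹ * g) b = b := h2
    refine ⟨k, ?_, ?_⟩
    · have := congrArg (α k) e1
      rw [← MulAut.mul_apply, ← map_mul, mul_inv_cancel_left] at this; exact this.symm
    · have := congrArg (α k) e2
      rw [← MulAut.mul_apply, ← map_mul, mul_inv_cancel_left] at this; exact this.symm
  -- part 1: the set equality
  have hmem : ∀ c x, x ∈ orbitOf α c ↔ ∃ g : G, α g c = x := fun c x => Set.mem_range
  have part1 : orbitOf α b * (orbitOf α a)⁻¹ = orbitOf α (b * a⁻¹) := by
    ext x
    constructor
    · rintro ⟨y, ⟨g, rfl⟩, z, hz, rfl⟩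
      rw [Set.mem_inv] at hz
      obtain ⟨h, hh⟩ := hz
      obtain ⟨k, hk1, hk2⟩ := hkey g h
      refine ⟨k, ?_⟩
      show (α k) (b * a⁻¹) = _
      have hh' : (α h) a = z⁻¹ := hh
      rw [map_mul, map_inv, hk1, hk2, hh', inv_inv]
    · rintro ⟨g, rfl⟩
      show (α g) (b * a⁻¹) ∈ _
      rw [map_mul, map_inv]
      exact Set.mul_mem_mul ⟨g, rfl⟩ (by rw [Set.mem_inv, inv_inv]; exact ⟨g, rfl⟩)
  refine ⟨part1, ?_⟩
  -- part 2: the cardinality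
  rw [part1]
  set U := MulAction.stabilizer G (b * a⁻¹) with hUdef
  have hUm : U.index = (orbitOf α (b * a⁻¹)).ncard := by
    rw [hUdef, MulAction.index_stabilizer, horb]
  set m := (orbitOf α (b * a⁻¹)).ncard with hmdef
  have hSTU : S ⊓ T ≤ U := by
    intro g hg
    obtain ⟨h1, h2⟩ := Subgroup.mem_inf.mp hg
    have e1 : α g a = a := h1
    have e2 : α g b = b := h2
    show α g (b * a⁻¹) = b * a⁻¹
    rw [map_mul, map_inv, e1, e2]
  have hdvd : m ∣ (orbitOf α a).ncard * (orbitOf α b).ncard := by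
    rw [← hSa, ← hTb, ← hUm, ← hST]
    exact Subgroup.index_dvd_of_le hSTU
  -- m ≥ |L₂|
  have hge : (orbitOf α b).ncard ≤ m := by
    have himg : (fun y => y * a⁻¹) '' orbitOf α b ⊆ orbitOf α (b * a⁻¹) := by
      rw [← part1]
      rintro x ⟨y, hy, rfl⟩
      exact Set.mul_mem_mul hy (by rw [Set.mem_inv, inv_inv]; exact ⟨1, by simp⟩)
    calc (orbitOf α b).ncard = ((fun y => y * a⁻¹) '' orbitOf α b).ncard :=
          (Set.ncard_image_of_injective _ (mul_left_injective a⁻¹)).symm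
      _ ≤ m := Set.ncard_le_ncard himg (Set.toFinite _)
  have hm1 : 1 < m := lt_of_lt_of_le hb hge
  have hmpos : 0 < m := Nat.lt_of_lt_of_le Nat.one_pos hm1.le
  have hnd := hdist (b * a⁻¹) hm1
  push_neg at hnd
  -- gcd(m, |L₂|) > 1
  have hg2 : 1 < Nat.gcd m (orbitOf α b).ncard := by
    by_contra hgg
    have hcop2 : Nat.Coprime m (orbitOf α b).ncard := by
      have := Nat.gcd_pos_of_pos_left (orbitOf α b).ncard hmpos
      omega
    have : m ∣ (orbitOf α a).ncard := hcop2.dvd_of_dvd_mul_right hdvd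
    have := Nat.le_of_dvd (by omega) this
    omega
  have hg1 : Nat.Coprime m (orbitOf α a).ncard := by
    have := hnd
    have hgcdpos := Nat.gcd_pos_of_pos_left (orbitOf α a).ncard hmpos
    have hle1 : ¬ 1 < Nat.gcd m (orbitOf α a).ncard := fun hc => (hnd hc).not_gt hg2
    unfold Nat.Coprime; omega
  have : m ∣ (orbitOf α b).ncard := hg1.dvd_of_dvd_mul_left hdvd
  exact le_antisymm (Nat.le_of_dvd (by omega) this) hge
end

section
/- Let G and H be finite groups whose orders have the same prime factors, and let α : G →* MulAut H be an action by automorphisms. Let L₁ and L₂ be non-trivial orbits with |L₂| > |L₁|, such that gcd(|L₁|,|L₂|) = 1 and no non-trivial orbit L₃ satisfies both gcd(|L₃|,|L₁|) > 1 and gcd(|L₃|,|L₂|) > 1. Then the triple set product satisfies L₂·L₁⁻¹·L₁ = L₂. -/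
open Pointwise MulAction

section helpers
variable {G H : Type*} [Group G] [Group H] [Finite G] [Finite H] [MulDistribMulAction G H]

lemma ncard_sprod {A B : Type*} (s : Set A) (t : Set B) :
    (s ×ˢ t).ncard = s.ncard * t.ncard := by
  rw [← Nat.card_coe_set_eq, ← Nat.card_coe_set_eq, ← Nat.card_coe_set_eq,
    Nat.card_congr (Equiv.Set.prod s t), Nat.card_prod]

lemma pair_trans (u v : H)
    (hco : Nat.Coprime (orbit G u).ncard (orbit G v).ncard)
    {u' v' : H} (hu' : u' ∈ orbit G u) (hv' : v' ∈ orbit G v) :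
    ∃ g : G, g • u = u' ∧ g • v = v' := by
  have hsub : orbit G (u, v) ⊆ orbit G u ×ˢ orbit G v := by
    rintro ⟨x, y⟩ ⟨g, hg⟩
    exact ⟨⟨g, congrArg Prod.fst hg⟩, ⟨g, congrArg Prod.snd hg⟩⟩
  have hstab : stabilizer G (u, v) = stabilizer G u ⊓ stabilizer G v := by
    ext g
    simp [mem_stabilizer_iff, Prod.ext_iff]
  have hd1 : (orbit G u).ncard ∣ (orbit G (u, v)).ncard := by
    rw [← index_stabilizer, ← index_stabilizer]
    exact Subgroup.index_dvd_of_le (hstab ▸ inf_le_left)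
  have hd2 : (orbit G v).ncard ∣ (orbit G (u, v)).ncard := by
    rw [← index_stabilizer, ← index_stabilizer]
    exact Subgroup.index_dvd_of_le (hstab ▸ inf_le_right)
  have hdvd : (orbit G u).ncard * (orbit G v).ncard ∣ (orbit G (u, v)).ncard :=
    hco.mul_dvd_of_dvd_of_dvd hd1 hd2
  have hle : (orbit G (u, v)).ncard ≤ (orbit G u).ncard * (orbit G v).ncard := by
    have := Set.ncard_le_ncard hsub (Set.toFinite _)
    rwa [ncard_sprod] at this
  have hpos : 0 < (orbit G (u, v)).ncard :=
    (Set.ncard_pos (Set.toFinite _)).mpr ⟨_, mem_orbit_self _⟩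
  have heq : orbit G (u, v) = orbit G u ×ˢ orbit G v := by
    apply Set.eq_of_subset_of_ncard_le hsub _ (Set.toFinite _)
    rw [ncard_sprod]
    exact Nat.le_of_dvd hpos hdvd
  have : (u', v') ∈ orbit G (u, v) := heq ▸ ⟨hu', hv'⟩
  obtain ⟨g, hg⟩ := this
  exact ⟨g, congrArg Prod.fst hg, congrArg Prod.snd hg⟩

lemma orbit_mul_orbit (u v : H)
    (hco : Nat.Coprime (orbit G u).ncard (orbit G v).ncard) :
    orbit G u * orbit G v = orbit G (u * v) := by
  ext x
  constructor
  · rintro ⟨y, hy, z, hz, rfl⟩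
    obtain ⟨g, hgu, hgv⟩ := pair_trans u v hco hy hz
    exact ⟨g, by show g • (u * v) = y * z; rw [smul_mul', hgu, hgv]⟩
  · rintro ⟨g, rfl⟩
    show g • (u * v) ∈ _
    rw [smul_mul']
    exact Set.mul_mem_mul (mem_orbit u g) (mem_orbit v g)

lemma orbit_inv (v : H) : (orbit G v)⁻¹ = orbit G v⁻¹ := by
  ext x
  simp only [Set.mem_inv, MulAction.mem_orbit_iff]
  constructor
  · rintro ⟨g, hg⟩
    exact ⟨g, by rw [smul_inv', hg, inv_inv]⟩
  · rintro ⟨g, rfl⟩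
    exact ⟨g, by rw [smul_inv', inv_inv]⟩

lemma card_le_orbit_mul (u v : H)
    (hco : Nat.Coprime (orbit G u).ncard (orbit G v).ncard) :
    (orbit G v).ncard ≤ (orbit G (u * v)).ncard := by
  rw [← orbit_mul_orbit u v hco]
  have himg : (u * ·) '' orbit G v ⊆ orbit G u * orbit G v := by
    rintro x ⟨y, hy, rfl⟩
    exact Set.mul_mem_mul (mem_orbit_self u) hy
  calc (orbit G v).ncard = ((u * ·) '' orbit G v).ncard :=
        (Set.ncard_image_of_injective _ (mul_right_injective u)).symm
    _ ≤ _ := Set.ncard_le_ncard himg (Set.toFinite _)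

lemma card_le_orbit_mul' (u v : H)
    (hco : Nat.Coprime (orbit G u).ncard (orbit G v).ncard) :
    (orbit G u).ncard ≤ (orbit G (u * v)).ncard := by
  rw [← orbit_mul_orbit u v hco]
  have himg : (· * v) '' orbit G u ⊆ orbit G u * orbit G v := by
    rintro x ⟨y, hy, rfl⟩
    exact Set.mul_mem_mul hy (mem_orbit_self v)
  calc (orbit G u).ncard = ((· * v) '' orbit G u).ncard :=
        (Set.ncard_image_of_injective _ (mul_left_injective v)).symm
    _ ≤ _ := Set.ncard_le_ncard himg (Set.toFinite _)

end helpers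

theorem stmt_2 {G H : Type*} [Group G] [Group H] [Finite G] [Finite H]
    (α : G →* MulAut H)
    (hpf : ∀ p : ℕ, p.Prime → (p ∣ Nat.card G ↔ p ∣ Nat.card H))
    (a b : H)
    (ha : 1 < (orbitOf α a).ncard) (hb : 1 < (orbitOf α b).ncard)
    (hlt : (orbitOf α a).ncard < (orbitOf α b).ncard)
    (hco : Nat.gcd (orbitOf α a).ncard (orbitOf α b).ncard = 1)
    (hdist : ∀ c : H, 1 < (orbitOf α c).ncard →
      ¬(1 < Nat.gcd (orbitOf α c).ncard (orbitOf α a).ncard ∧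
        1 < Nat.gcd (orbitOf α c).ncard (orbitOf α b).ncard)) :
    orbitOf α b * (orbitOf α a)⁻¹ * orbitOf α a = orbitOf α b := by
  letI : MulDistribMulAction G H := MulDistribMulAction.compHom H α
  have horb : ∀ x : H, orbitOf α x = orbit G x := fun x => rfl
  simp only [horb] at *
  set c : H := b * a⁻¹ with hc
  -- orbit sizes
  have hcoab : Nat.Coprime (orbit G a).ncard (orbit G b).ncard := hco
  have hinv : (orbit G a)⁻¹ = orbit G a⁻¹ := orbit_inv a
  have hainv : (orbit G a⁻¹).ncard = (orbit G a).ncard := by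
    rw [← hinv, Set.ncard_inv]
  have h1 : orbit G b * (orbit G a)⁻¹ = orbit G c := by
    rw [hinv, hc]
    exact orbit_mul_orbit b a⁻¹ (by rw [hainv]; exact hcoab.symm)
  have hc3 : Nat.Coprime (orbit G b).ncard (orbit G a⁻¹).ncard := by
    rw [hainv]; exact hcoab.symm
  have hcb : (orbit G b).ncard ≤ (orbit G c).ncard := card_le_orbit_mul' b a⁻¹ hc3
  have hc1 : 1 < (orbit G c).ncard := lt_of_lt_of_le hb hcb
  have hcpos : 0 < (orbit G c).ncard := by omega
  have hapos : 0 < (orbit G a).ncard := by omega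
  have hbpos : 0 < (orbit G b).ncard := by omega
  have := hdist c hc1
  have hga := Nat.gcd_pos_of_pos_left (orbit G a).ncard hcpos
  have hgb := Nat.gcd_pos_of_pos_left (orbit G b).ncard hcpos
  have hcase : Nat.gcd (orbit G c).ncard (orbit G a).ncard = 1 ∨
      Nat.gcd (orbit G c).ncard (orbit G b).ncard = 1 := by omega
  rcases hcase with hA | hB
  · rw [h1, orbit_mul_orbit c a hA, hc, inv_mul_cancel_right]
  · exfalso
    have hcinv : (orbit G c⁻¹).ncard = (orbit G c).ncard := by
      rw [← orbit_inv, Set.ncard_inv]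
    have : (orbit G b).ncard ≤ (orbit G (c⁻¹ * b)).ncard :=
      card_le_orbit_mul c⁻¹ b (by rw [hcinv]; exact hB)
    have hcb' : c⁻¹ * b = a := by rw [hc]; group
    rw [hcb'] at this
    omega
end

section
/- Let G and H be finite groups whose orders have the same prime factors, and let α : G →* MulAut H be an action by automorphisms. Let L₁ and L₂ be non-trivial orbits with |L₂| > |L₁|, such that gcd(|L₁|,|L₂|) = 1 and no non-trivial orbit L₃ satisfies both gcd(|L₃|,|L₁|) > 1 and gcd(|L₃|,|L₂|) > 1. Then the subgroup K of H generated by the set L₁⁻¹·L₁ = {x⁻¹y : x, y ∈ L₁} is non-trivial (|K| > 1) and |K| divides |L₂|. -/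
open Pointwise

theorem stmt_3 {G H : Type*} [Group G] [Group H] [Finite G] [Finite H]
    (α : G →* MulAut H)
    (hpf : ∀ p : ℕ, p.Prime → (p ∣ Nat.card G ↔ p ∣ Nat.card H))
    (a b : H)
    (ha : 1 < (orbitOf α a).ncard) (hb : 1 < (orbitOf α b).ncard)
    (hlt : (orbitOf α a).ncard < (orbitOf α b).ncard)
    (hco : Nat.gcd (orbitOf α a).ncard (orbitOf α b).ncard = 1)
    (hdist : ∀ c : H, 1 < (orbitOf α c).ncard →
      ¬(1 < Nat.gcd (orbitOf α c).ncard (orbitOf α a).ncard ∧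
        1 < Nat.gcd (orbitOf α c).ncard (orbitOf α b).ncard)) :
    1 < Nat.card (Subgroup.closure ((orbitOf α a)⁻¹ * orbitOf α a)) ∧
    Nat.card (Subgroup.closure ((orbitOf α a)⁻¹ * orbitOf α a)) ∣ (orbitOf α b).ncard := by
  letI : MulAction G H := MulAction.compHom H α
  have horb : ∀ c : H, orbitOf α c = MulAction.orbit G c := fun c => rfl
  
  set L₁ := orbitOf α a with hL₁
  set L₂ := orbitOf α b with hL₂
  have d1pos : 0 < L₁.ncard := one_pos.trans ha
  have d2pos : 0 < L₂.ncard := one_pos.trans hb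
  -- step 1 : orbit of the pair is full
  have s1 : MulAction.stabilizer G (a, b) ≤ MulAction.stabilizer G a := by
    intro g hg
    have hg' : g • (a, b) = (a, b) := hg
    exact congrArg Prod.fst hg'
  have s1' : MulAction.stabilizer G (a, b) ≤ MulAction.stabilizer G b := by
    intro g hg
    have hg' : g • (a, b) = (a, b) := hg
    exact congrArg Prod.snd hg'
  have hd1 : L₁.ncard ∣ (MulAction.orbit G (a, b)).ncard := by
    rw [hL₁, horb, ← MulAction.index_stabilizer, ← MulAction.index_stabilizer]
    exact Subgroup.index_dvd_of_le s1
  have hd2 : L₂.ncard ∣ (MulAction.orbit G (a, b)).ncard := by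
    rw [hL₂, horb, ← MulAction.index_stabilizer, ← MulAction.index_stabilizer]
    exact Subgroup.index_dvd_of_le s1'
  have hsub : MulAction.orbit G (a, b) ⊆ L₁ ×ˢ L₂ := by
    rintro ⟨u, x⟩ ⟨g, hg⟩
    refine Set.mem_prod.mpr ⟨⟨g, ?_⟩, ⟨g, ?_⟩⟩
    · exact congrArg Prod.fst hg
    · exact congrArg Prod.snd hg
  have hcardprod : (L₁ ×ˢ L₂).ncard = L₁.ncard * L₂.ncard := by
    rw [← Nat.card_coe_set_eq, ← Nat.card_coe_set_eq, ← Nat.card_coe_set_eq,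
      Nat.card_congr (Equiv.Set.prod L₁ L₂), Nat.card_prod]
  have hn0pos : 0 < (MulAction.orbit G (a, b)).ncard :=
    (Set.ncard_pos (Set.toFinite _)).mpr ⟨(a, b), MulAction.mem_orbit_self _⟩
  have hdvd : L₁.ncard * L₂.ncard ∣ (MulAction.orbit G (a, b)).ncard :=
    Nat.Coprime.mul_dvd_of_dvd_of_dvd hco hd1 hd2
  have horbpair : MulAction.orbit G (a, b) = L₁ ×ˢ L₂ := by
    refine Set.eq_of_subset_of_ncard_le hsub ?_ (Set.toFinite _)
    rw [hcardprod]
    exact Nat.le_of_dvd hn0pos hdvd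
  have hfull : ∀ u ∈ L₁, ∀ x ∈ L₂, ∃ g : G, α g a = u ∧ α g b = x := by
    intro u hu x hx
    have : (u, x) ∈ MulAction.orbit G (a, b) := by
      rw [horbpair]; exact Set.mem_prod.mpr ⟨hu, hx⟩
    obtain ⟨g, hg⟩ := this
    exact ⟨g, congrArg Prod.fst hg, congrArg Prod.snd hg⟩
  -- step 2 : orbit of a*b is L₁ * L₂
  have hmul : MulAction.orbit G (a * b) = L₁ * L₂ := by
    ext y
    constructor
    · rintro ⟨g, rfl⟩
      show α g (a * b) ∈ L₁ * L₂
      rw [map_mul]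
      exact Set.mul_mem_mul ⟨g, rfl⟩ ⟨g, rfl⟩
    · intro hy
      rw [Set.mem_mul] at hy
      obtain ⟨u, hu, x, hx, rfl⟩ := hy
      obtain ⟨g, h1, h2⟩ := hfull u hu x hx
      exact ⟨g, show α g (a * b) = u * x by rw [map_mul, h1, h2]⟩
  set n := (L₁ * L₂).ncard with hn
  have s2 : MulAction.stabilizer G (a, b) ≤ MulAction.stabilizer G (a * b) := by
    intro g hg
    have h1 : α g a = a := s1 hg
    have h2 : α g b = b := s1' hg
    show α g (a * b) = a * b
    rw [map_mul, h1, h2]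
  have hn_dvd : n ∣ L₁.ncard * L₂.ncard := by
    have := Subgroup.index_dvd_of_le s2
    rwa [MulAction.index_stabilizer, MulAction.index_stabilizer, hmul, horbpair, hcardprod]
      at this
  have hamem : a ∈ L₁ := ⟨1, by simp⟩
  have hbmem : b ∈ L₂ := ⟨1, by simp⟩
  -- for u ∈ L₁, u • L₂ ⊆ L₁ * L₂ with full cardinality |L₂|
  have himg : ∀ u ∈ L₁, (fun x => u * x) '' L₂ ⊆ L₁ * L₂ := by
    rintro u hu y ⟨x, hx, rfl⟩
    exact Set.mul_mem_mul hu hx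
  have himgcard : ∀ u : H, ((fun x => u * x) '' L₂).ncard = L₂.ncard := fun u =>
    Set.ncard_image_of_injective _ (mul_right_injective u)
  have hn_ge : L₂.ncard ≤ n := by
    rw [hn, ← himgcard a]
    exact Set.ncard_le_ncard (himg a hamem) (Set.toFinite _)
  have hn_gt1 : 1 < n := lt_of_lt_of_le hb hn_ge
  have hnorb : (orbitOf α (a * b)).ncard = n := by rw [horb, hmul]
  have hgcd2 : Nat.gcd n L₂.ncard ≠ 1 := by
    intro hg2
    have : n ∣ L₁.ncard := (Nat.Coprime.dvd_of_dvd_mul_right hg2) hn_dvd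
    have := Nat.le_of_dvd d1pos this
    omega
  have hgcd2' : 1 < Nat.gcd n L₂.ncard := by
    have : Nat.gcd n L₂.ncard ≠ 0 := fun h => by
      have := Nat.eq_zero_of_gcd_eq_zero_right h; omega
    omega
  have hgcd1 : Nat.gcd n L₁.ncard = 1 := by
    have hnd := hdist (a * b) (by rw [hnorb]; exact hn_gt1)
    rw [hnorb] at hnd
    have h1 : ¬ 1 < Nat.gcd n L₁.ncard := fun h => hnd ⟨h, hgcd2'⟩
    have : Nat.gcd n L₁.ncard ≠ 0 := fun h => by
      have := Nat.eq_zero_of_gcd_eq_zero_left h; omega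
    omega
  have hn_eq : n = L₂.ncard := by
    have : n ∣ L₂.ncard := (Nat.Coprime.dvd_of_dvd_mul_left hgcd1) hn_dvd
    exact le_antisymm (Nat.le_of_dvd d2pos this) hn_ge
  -- step 3 : translates fill up
  have huL : ∀ u ∈ L₁, (fun x => u * x) '' L₂ = L₁ * L₂ := by
    intro u hu
    refine Set.eq_of_subset_of_ncard_le (himg u hu) ?_ (Set.toFinite _)
    rw [himgcard u, ← hn, hn_eq]
  -- step 4 : generators preserve L₂
  have hgen : ∀ s ∈ L₁⁻¹ * L₁, (fun x => s * x) '' L₂ = L₂ := by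
    intro s hs
    rw [Set.mem_mul] at hs
    obtain ⟨w, hw, v, hv, rfl⟩ := hs
    have hu : w⁻¹ ∈ L₁ := hw
    calc (fun x => (w * v) * x) '' L₂
        = (fun x => w * x) '' ((fun x => v * x) '' L₂) := by
          rw [Set.image_image]; simp [mul_assoc]
      _ = (fun x => w * x) '' ((fun x => w⁻¹ * x) '' L₂) := by rw [huL v hv, huL w⁻¹ hu]
      _ = L₂ := by rw [Set.image_image]; simp
  -- step 5 : the whole closure preserves L₂
  have hK : ∀ k ∈ Subgroup.closure (L₁⁻¹ * L₁), (fun x => k * x) '' L₂ = L₂ := by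
    intro k hk
    refine Subgroup.closure_induction hgen (by simp) ?_ ?_ hk
    · intro x y _ _ px py
      calc (fun t => (x * y) * t) '' L₂
          = (fun t => x * t) '' ((fun t => y * t) '' L₂) := by
            rw [Set.image_image]; simp [mul_assoc]
        _ = L₂ := by rw [py, px]
    · intro x _ px
      have := congrArg (Set.image (fun t => x⁻¹ * t)) px
      rw [Set.image_image] at this
      simpa using this.symm
  set K := Subgroup.closure (L₁⁻¹ * L₁) with hKdef
  -- nontriviality
  obtain ⟨u, v, hu, hv, huv⟩ := (Set.one_lt_ncard_iff (Set.toFinite _)).mp ha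
  have hSmem : u⁻¹ * v ∈ L₁⁻¹ * L₁ := Set.mul_mem_mul (by simpa using hu) hv
  have hne1 : u⁻¹ * v ≠ 1 := fun h => huv (by
    have := congrArg (fun t => u * t) h
    simpa using this.symm)
  have hKne : K ≠ ⊥ := fun h => hne1 (Subgroup.mem_bot.mp (h ▸ Subgroup.subset_closure hSmem))
  refine ⟨(Subgroup.one_lt_card_iff_ne_bot K).mpr hKne, ?_⟩
  -- divisibility
  have hKinv : ∀ k ∈ K, ∀ x ∈ L₂, k * x ∈ L₂ := by
    intro k hk x hx
    rw [← hK k hk]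
    exact Set.mem_image_of_mem _ hx
  have hT : L₂⁻¹ = QuotientGroup.mk (s := K) ⁻¹' (QuotientGroup.mk '' L₂⁻¹) := by
    refine Set.Subset.antisymm (Set.subset_preimage_image _ _) ?_
    intro x hx
    obtain ⟨t, ht, hq⟩ := hx
    have hk : t⁻¹ * x ∈ K := QuotientGroup.eq.mp hq
    have ht2 : t⁻¹ ∈ L₂ := ht
    have hmem : (t⁻¹ * x)⁻¹ * t⁻¹ ∈ L₂ := hKinv _ (inv_mem hk) _ ht2
    have : (t⁻¹ * x)⁻¹ * t⁻¹ = x⁻¹ := by group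
    rw [this] at hmem
    exact hmem
  have hcardT : (L₂⁻¹ : Set H).ncard =
      Nat.card K * Nat.card (QuotientGroup.mk (s := K) '' L₂⁻¹ : Set (H ⧸ K)) := by
    conv_lhs => rw [← Nat.card_coe_set_eq, hT]
    rw [Nat.card_congr (QuotientGroup.preimageMkEquivSubgroupProdSet K _), Nat.card_prod]
  have hinvcard : (L₂⁻¹ : Set H).ncard = L₂.ncard := by
    have himg : (Inv.inv '' L₂ : Set H) = L₂⁻¹ := by
      ext y
      simp only [Set.mem_image, Set.mem_inv]
      constructor
      · rintro ⟨x, hx, rfl⟩; simpa using hx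
      · intro hy; exact ⟨y⁻¹, hy, by simp⟩
    rw [← himg]
    exact Set.ncard_image_of_injective _ inv_injective
  rw [← hinvcard, hcardT]
  exact Dvd.intro _ rfl
end

section
/- Let G and H be finite groups whose orders have the same prime factors, and let α : G →* MulAut H be an action by automorphisms. Then there do not exist three non-trivial orbits L₁, L₂, L₃ with |L₃| > |L₂| > |L₁| such that: gcd(|L₁|,|L₂|) = 1 and no non-trivial orbit is adjacent in the common divisor graph to both L₁ and L₂ (i.e. d(L₁,L₂) ≥ 3), and gcd(|L₂|,|L₃|) = 1 and no non-trivial orbit is adjacent to both L₂ and L₃ (i.e. d(L₂,L₃) ≥ 3). -/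
open Pointwise

section Aux

variable {G H : Type*} [Group G] [Group H] [Finite G] [Finite H] (α : G →* MulAut H)

lemma mem_orbitOf_self (a : H) : a ∈ orbitOf α a := ⟨1, by simp⟩

lemma orbitOf_inv (a : H) : orbitOf α a⁻¹ = (orbitOf α a)⁻¹ := by
  ext x
  simp only [orbitOf, Set.mem_range, Set.mem_inv]
  constructor
  · rintro ⟨g, rfl⟩; exact ⟨g, by simp⟩
  · rintro ⟨g, hg⟩; exact ⟨g, by rw [map_inv, hg]; simp⟩

lemma ncard_orbitOf_inv (a : H) : (orbitOf α a⁻¹).ncard = (orbitOf α a).ncard := by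
  rw [orbitOf_inv, Set.ncard_inv]

/-- If a finite set is closed under right multiplication by `t`, then the order of `t`
divides its cardinality. -/
lemma orderOf_dvd_ncard_of_mul_mem {t : H} {B : Set H}
    (hcl : ∀ x ∈ B, x * t ∈ B) : orderOf t ∣ B.ncard := by
  classical
  have hfin : B.Finite := Set.toFinite _
  have himg : (fun x => x * t) '' B = B := by
    apply Set.eq_of_subset_of_ncard_le
    · rintro _ ⟨x, hx, rfl⟩; exact hcl x hx
    · rw [Set.ncard_image_of_injective _ (mul_left_injective t)]
    · exact hfin
  have hinv : ∀ x ∈ B, x * t⁻¹ ∈ B := by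
    intro x hx
    rw [← himg] at hx
    obtain ⟨y, hy, hxy⟩ := hx
    have : x * t⁻¹ = y := by rw [← hxy]; group
    exact this ▸ hy
  have hz : ∀ (n : ℤ), ∀ x ∈ B, x * t ^ n ∈ B := by
    intro n
    induction n using Int.induction_on with
    | zero => simpa using fun x hx => hx
    | succ n ih =>
        intro x hx
        have := hcl _ (ih x hx)
        rwa [mul_assoc, ← zpow_add_one] at this
    | pred n ih =>
        intro x hx
        have := hinv _ (ih x hx)
        rwa [mul_assoc, ← zpow_sub_one] at this
  set T := Subgroup.zpowers t with hT
  have hBeq : B = (QuotientGroup.mk : H → H ⧸ T) ⁻¹' (QuotientGroup.mk '' B) := by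
    apply Set.Subset.antisymm (Set.subset_preimage_image _ _)
    rintro y hy
    obtain ⟨x, hx, hxy⟩ := hy
    have hmem : x⁻¹ * y ∈ T := QuotientGroup.eq.mp hxy
    obtain ⟨n, hn⟩ := Subgroup.mem_zpowers_iff.mp hmem
    have : y = x * t ^ n := by rw [hn]; group
    exact this ▸ hz n x hx
  have hcardeq : Nat.card B = Nat.card T * Nat.card (QuotientGroup.mk '' B : Set (H ⧸ T)) := by
    conv_lhs => rw [hBeq]
    rw [Nat.card_congr (QuotientGroup.preimageMkEquivSubgroupProdSet T (QuotientGroup.mk '' B)),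
      Nat.card_prod]
  rw [← Nat.card_coe_set_eq, hcardeq, ← Nat.card_zpowers t]
  exact Dvd.intro _ rfl

/-- Key lemma: if `|O(a)| < |O(b)|`, the orbit sizes are coprime, and no nontrivial
orbit is adjacent to both in the common divisor graph, then `a⁻¹ * x * y ∈ O(b)` for all
`x ∈ O(a)`, `y ∈ O(b)`. -/
lemma key_lemma {a b : H}
    (hlt : (orbitOf α a).ncard < (orbitOf α b).ncard)
    (hgcd : Nat.gcd (orbitOf α a).ncard (orbitOf α b).ncard = 1)
    (hd : ∀ d : H, 1 < (orbitOf α d).ncard →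
        ¬(1 < Nat.gcd (orbitOf α d).ncard (orbitOf α a).ncard ∧
          1 < Nat.gcd (orbitOf α d).ncard (orbitOf α b).ncard)) :
    ∀ x ∈ orbitOf α a, ∀ y ∈ orbitOf α b, a⁻¹ * x * y ∈ orbitOf α b := by
  classical
  letI : MulDistribMulAction G H := MulDistribMulAction.compHom H α
  have horb : ∀ x : H, orbitOf α x = MulAction.orbit G x := fun x => rfl
  have hcard : ∀ x : H, (orbitOf α x).ncard = (MulAction.stabilizer G x).index := by
    intro x
    rw [horb, ← Nat.card_coe_set_eq,
      Nat.card_congr (MulAction.orbitEquivQuotientStabilizer G x), Subgroup.index_eq_card]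
  set Sa := MulAction.stabilizer G a with hSa
  set Sb := MulAction.stabilizer G b with hSb
  set n1 := (orbitOf α a).ncard with hn1
  set n2 := (orbitOf α b).ncard with hn2
  have hn1pos : 0 < n1 :=
    (Set.ncard_pos (Set.toFinite _)).mpr ⟨a, mem_orbitOf_self α a⟩
  have hn2pos : 0 < n2 := hn1pos.trans hlt
  set k := Sb.relIndex Sa with hk
  have hSaidx : Sa.index = n1 := (hcard a).symm
  have hNle : (Sa ⊓ Sb).index = k * n1 := by
    rw [hk, ← Subgroup.inf_relIndex_right (H := Sb) (K := Sa), inf_comm Sb Sa, ← hSaidx]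
    exact (Subgroup.relIndex_mul_index (inf_le_left : Sa ⊓ Sb ≤ Sa)).symm
  have hn2N : n2 ∣ (Sa ⊓ Sb).index := by
    rw [hn2, hcard b]
    exact Subgroup.index_dvd_of_le inf_le_right
  have hn2k : n2 ∣ k :=
    Nat.Coprime.dvd_of_dvd_mul_right (Nat.coprime_comm.mp hgcd) (hNle ▸ hn2N)
  -- the orbit of b under Sa equals the full orbit of b
  have hSaOrbCard : (MulAction.orbit Sa b).ncard = k := by
    rw [← Nat.card_coe_set_eq,
      Nat.card_congr (MulAction.orbitEquivQuotientStabilizer Sa b)]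
    have hstab : MulAction.stabilizer Sa b = Sb.subgroupOf Sa := by
      ext ⟨g, hg⟩
      simp only [MulAction.mem_stabilizer_iff, Subgroup.mem_subgroupOf]
      rfl
    rw [hstab, hk, Subgroup.relIndex, Subgroup.index_eq_card]
  have hSaOrbSub : MulAction.orbit Sa b ⊆ orbitOf α b := by
    rintro _ ⟨⟨g, hg⟩, rfl⟩
    exact ⟨g, rfl⟩
  have hkle : k ≤ n2 := hSaOrbCard ▸ Set.ncard_le_ncard hSaOrbSub (Set.toFinite _)
  have hkpos : 0 < k :=
    hSaOrbCard ▸ (Set.ncard_pos (Set.toFinite _)).mpr ⟨b, MulAction.mem_orbit_self b⟩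
  have hkn2 : k = n2 := le_antisymm hkle (Nat.le_of_dvd hkpos hn2k)
  have horbeq : MulAction.orbit Sa b = orbitOf α b :=
    Set.eq_of_subset_of_ncard_le hSaOrbSub (by rw [hSaOrbCard, hkn2]) (Set.toFinite _)
  -- a * O(b) ⊆ O(ab)
  have claim1 : ∀ y ∈ orbitOf α b, a * y ∈ orbitOf α (a * b) := by
    intro y hy
    rw [← horbeq] at hy
    obtain ⟨⟨g, hg⟩, rfl⟩ := hy
    refine ⟨g, ?_⟩
    have hga : α g a = a := hg
    show α g (a * b) = _
    rw [map_mul, hga]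
    rfl
  -- |O(ab)| = n2 and O(ab) = a • O(b)
  set m := (orbitOf α (a * b)).ncard with hm
  have hstab_le : Sa ⊓ Sb ≤ MulAction.stabilizer G (a * b) := by
    rintro g ⟨hga, hgb⟩
    show g • (a * b) = a * b
    rw [smul_mul']
    rw [MulAction.mem_stabilizer_iff.mp hga, MulAction.mem_stabilizer_iff.mp hgb]
  have hm_dvd : m ∣ n2 * n1 := by
    have := Subgroup.index_dvd_of_le hstab_le
    rw [← hcard (a * b), ← hm, hNle, hkn2] at this
    exact this
  have himage : ((a * ·) '' orbitOf α b) ⊆ orbitOf α (a * b) := by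
    rintro _ ⟨y, hy, rfl⟩
    exact claim1 y hy
  have himcard : ((a * ·) '' orbitOf α b).ncard = n2 :=
    Set.ncard_image_of_injective _ (mul_right_injective a)
  have hn2m : n2 ≤ m := himcard ▸ Set.ncard_le_ncard himage (Set.toFinite _)
  have hmn2 : m = n2 := by
    have h1n2 : 1 < n2 := by omega
    have h1m : 1 < m := lt_of_lt_of_le h1n2 hn2m
    have := hd (a * b) h1m
    by_cases hg2 : 1 < Nat.gcd m n2
    · have hg1 : Nat.gcd m n1 = 1 := by
        by_contra hne
        have : 1 < Nat.gcd m n1 := by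
          have := Nat.gcd_pos_of_pos_right m hn1pos
          omega
        exact (hd (a * b) h1m) ⟨this, hg2⟩
      have : m ∣ n2 := (Nat.Coprime.dvd_of_dvd_mul_right hg1 hm_dvd)
      exact le_antisymm (Nat.le_of_dvd hn2pos this) hn2m
    · have hg2' : Nat.gcd m n2 = 1 := by
        have := Nat.gcd_pos_of_pos_right m hn2pos
        omega
      have : m ∣ n1 := Nat.Coprime.dvd_of_dvd_mul_left hg2' hm_dvd
      have := Nat.le_of_dvd hn1pos this
      omega
  have horb_ab : orbitOf α (a * b) = (a * ·) '' orbitOf α b :=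
    (Set.eq_of_subset_of_ncard_le himage (by rw [himcard, ← hmn2]) (Set.toFinite _)).symm
  -- conclusion
  intro x hx y hy
  obtain ⟨g, rfl⟩ := hx
  obtain ⟨h, rfl⟩ := hy
  show a⁻¹ * α g a * α h b ∈ orbitOf α b
  have hy' : α (g⁻¹ * h) b ∈ orbitOf α b := ⟨g⁻¹ * h, rfl⟩
  obtain ⟨s, hs0⟩ := claim1 _ hy'
  have hs : α s (a * b) = a * α (g⁻¹ * h) b := hs0
  have h2 : α g a * α h b = α (g * s) (a * b) := by
    rw [map_mul α g s, MulAut.mul_apply, hs, map_mul]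
    congr 1
    rw [← MulAut.mul_apply, ← map_mul]
    simp
  have h4 : α (g * s) (a * b) ∈ orbitOf α (a * b) := ⟨g * s, rfl⟩
  rw [horb_ab] at h4
  obtain ⟨y', hy'', hyy⟩ := h4
  have hfin : a⁻¹ * α g a * α h b = y' := by
    rw [mul_assoc, h2, ← hyy]
    group
  rw [hfin]
  exact hy''

end Aux

theorem stmt_4 {G H : Type*} [Group G] [Group H] [Finite G] [Finite H]
    (α : G →* MulAut H)
    (hpf : ∀ p : ℕ, p.Prime → (p ∣ Nat.card G ↔ p ∣ Nat.card H)) :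
    ¬ ∃ a b c : H,
      1 < (orbitOf α a).ncard ∧ 1 < (orbitOf α b).ncard ∧ 1 < (orbitOf α c).ncard ∧
      (orbitOf α a).ncard < (orbitOf α b).ncard ∧
      (orbitOf α b).ncard < (orbitOf α c).ncard ∧
      Nat.gcd (orbitOf α a).ncard (orbitOf α b).ncard = 1 ∧
      (∀ d : H, 1 < (orbitOf α d).ncard →
        ¬(1 < Nat.gcd (orbitOf α d).ncard (orbitOf α a).ncard ∧
          1 < Nat.gcd (orbitOf α d).ncard (orbitOf α b).ncard)) ∧
      Nat.gcd (orbitOf α b).ncard (orbitOf α c).ncard = 1 ∧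
      (∀ d : H, 1 < (orbitOf α d).ncard →
        ¬(1 < Nat.gcd (orbitOf α d).ncard (orbitOf α b).ncard ∧
          1 < Nat.gcd (orbitOf α d).ncard (orbitOf α c).ncard)) := by
  rintro ⟨a, b, c, h1a, h1b, h1c, hab, hbc, g12, d12, g23, d23⟩
  have hex : ∃ g : G, α g a ≠ a := by
    by_contra hno
    push_neg at hno
    have hsing : orbitOf α a = {a} :=
      Set.eq_singleton_iff_unique_mem.mpr
        ⟨mem_orbitOf_self α a, by rintro _ ⟨g, rfl⟩; exact hno g⟩
    rw [hsing, Set.ncard_singleton] at h1a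
    omega
  obtain ⟨g₀, hg₀⟩ := hex
  set t := a⁻¹ * α g₀ a with ht
  have htne : t ≠ 1 := by
    intro h
    rw [ht] at h
    exact hg₀ (inv_mul_eq_one.mp h).symm
  have htmul : ∀ y ∈ orbitOf α b, t * y ∈ orbitOf α b := by
    intro y hy
    rw [ht]
    exact key_lemma α hab g12 d12 (α g₀ a) ⟨g₀, rfl⟩ y hy
  have hy₀ : t * b ∈ orbitOf α b := htmul b (mem_orbitOf_self α b)
  have hbc' : (orbitOf α b⁻¹).ncard < (orbitOf α c⁻¹).ncard := by
    rw [ncard_orbitOf_inv, ncard_orbitOf_inv]; exact hbc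
  have g23' : Nat.gcd (orbitOf α b⁻¹).ncard (orbitOf α c⁻¹).ncard = 1 := by
    rw [ncard_orbitOf_inv, ncard_orbitOf_inv]; exact g23
  have d23' : ∀ d : H, 1 < (orbitOf α d).ncard →
      ¬(1 < Nat.gcd (orbitOf α d).ncard (orbitOf α b⁻¹).ncard ∧
        1 < Nat.gcd (orbitOf α d).ncard (orbitOf α c⁻¹).ncard) := by
    intro d hd1
    rw [ncard_orbitOf_inv, ncard_orbitOf_inv]
    exact d23 d hd1
  have hct : ∀ z ∈ orbitOf α c, z * t ∈ orbitOf α c := by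
    intro z hz
    have hy' : (t * b)⁻¹ ∈ orbitOf α b⁻¹ := by
      rw [orbitOf_inv]; exact Set.inv_mem_inv.mpr hy₀
    have hz' : z⁻¹ ∈ orbitOf α c⁻¹ := by
      rw [orbitOf_inv]; exact Set.inv_mem_inv.mpr hz
    have hmem := key_lemma α hbc' g23' d23' _ hy' _ hz'
    rw [orbitOf_inv] at hmem
    have h5 : z * t = ((b⁻¹)⁻¹ * (t * b)⁻¹ * z⁻¹)⁻¹ := by group
    rw [h5]
    exact Set.mem_inv.mp hmem
  have hdvd3 : orderOf t ∣ (orbitOf α c).ncard := orderOf_dvd_ncard_of_mul_mem hct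
  have hdvd2 : orderOf t ∣ (orbitOf α b).ncard := by
    have hcl : ∀ x ∈ (orbitOf α b)⁻¹, x * t⁻¹ ∈ (orbitOf α b)⁻¹ := by
      intro x hx
      rw [Set.mem_inv] at hx ⊢
      simpa [mul_inv_rev] using htmul _ hx
    have := orderOf_dvd_ncard_of_mul_mem hcl
    rwa [orderOf_inv, Set.ncard_inv] at this
  have hdvd1 : orderOf t ∣ 1 := g23 ▸ Nat.dvd_gcd hdvd2 hdvd3
  exact htne (orderOf_eq_one_iff.mp (Nat.dvd_one.mp hdvd1))
end

section
/- Let G and H be finite groups whose orders have the same prime factors, and let α : G →* MulAut H be an action by automorphisms. Then the common divisor graph C(α) has at most two connected components, i.e. the number of connected components of the simple graph whose vertices are the non-trivial orbits (with distinct orbits adjacent iff their cardinalities are not coprime) is at most 2. -/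
set_option linter.unusedSectionVars false


/-- The common divisor graph of the action `α`: vertices are the non-trivial orbits,
two distinct vertices are adjacent iff their cardinalities have a common divisor `> 1`. -/
def commonDivisorGraph {G H : Type*} [Group G] [Group H] (α : G →* MulAut H) :
    SimpleGraph {L : Set H // (∃ a : H, L = orbitOf α a) ∧ 1 < L.ncard} :=
  SimpleGraph.fromRel fun L₁ L₂ => 1 < Nat.gcd L₁.1.ncard L₂.1.ncard

namespace CDGAux

variable {G H : Type*} [Group G] [Group H] [Finite G] [Finite H] (α : G →* MulAut H)

/-- The stabilizer of `a` under the action via `α`. -/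
def stab (a : H) : Subgroup G where
  carrier := {g | α g a = a}
  one_mem' := by simp
  mul_mem' := by
    intro g g' hg hg'
    simp only [Set.mem_setOf_eq, map_mul, MulAut.mul_apply] at *
    rw [hg', hg]
  inv_mem' := by
    intro g hg
    simp only [Set.mem_setOf_eq] at *
    calc α g⁻¹ a = α g⁻¹ (α g a) := by rw [hg]
    _ = a := by rw [← MulAut.mul_apply, ← map_mul]; simp

lemma mem_stab_iff {a : H} {g : G} : g ∈ stab α a ↔ α g a = a := Iff.rfl

lemma mem_orbitOf_self (a : H) : a ∈ orbitOf α a := ⟨1, by simp⟩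

lemma orbitOf_finite (a : H) : (orbitOf α a).Finite := Set.toFinite _

lemma ncard_orbitOf_pos (a : H) : 0 < (orbitOf α a).ncard :=
  (Set.ncard_pos (orbitOf_finite α a)).mpr ⟨a, mem_orbitOf_self α a⟩

lemma ncard_orbitOf_eq_index (a : H) :
    (orbitOf α a).ncard = (stab α a).index := by
  letI : MulAction G H := MulAction.compHom H α
  have h1 : orbitOf α a = MulAction.orbit G a := rfl
  have h2 : stab α a = MulAction.stabilizer G a := by
    ext g
    exact Iff.rfl
  rw [h1, h2, ← Nat.card_coe_set_eq,
    Nat.card_congr (MulAction.orbitEquivQuotientStabilizer G a), Subgroup.index_eq_card]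

lemma orbitOf_inv (a : H) : orbitOf α a⁻¹ = (fun x => x⁻¹) '' orbitOf α a := by
  ext c
  constructor
  · rintro ⟨g, rfl⟩
    refine ⟨α g a, ⟨g, rfl⟩, ?_⟩
    show (α g a)⁻¹ = α g a⁻¹
    rw [map_inv]
  · rintro ⟨x, ⟨g, rfl⟩, rfl⟩
    refine ⟨g, ?_⟩
    show α g a⁻¹ = (α g a)⁻¹
    rw [map_inv]

lemma ncard_orbitOf_inv (a : H) :
    (orbitOf α a⁻¹).ncard = (orbitOf α a).ncard := by
  rw [orbitOf_inv, Set.ncard_image_of_injective _ inv_injective]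

/-- Master lemma: if `|O(u)| < |O(v)|` and `p = u*v` or `p = v*u`, then
`gcd(|O(p)|, |O(v)|) > 1`. -/
lemma master (u v p : H) (hp : p = u * v ∨ p = v * u)
    (hlt : (orbitOf α u).ncard < (orbitOf α v).ncard) :
    1 < Nat.gcd (orbitOf α p).ncard (orbitOf α v).ncard := by
  set S := stab α u with hS
  set T := stab α v with hT
  set U := stab α p with hU
  -- S ⊓ U ≤ T
  have hSUT : S ⊓ U ≤ T := by
    rintro g ⟨hgS, hgU⟩
    have hgu : α g u = u := hgS
    have hgp : α g p = p := hgU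
    rw [mem_stab_iff]
    rcases hp with rfl | rfl
    · have := hgp
      rw [map_mul, hgu] at this
      exact mul_left_cancel this
    · have := hgp
      rw [map_mul, hgu] at this
      exact mul_right_cancel this
  have hfinT : Finite (G ⧸ T) := Quotient.finite _
  have hfinS : Finite (G ⧸ S) := Quotient.finite _
  by_contra hgcd
  -- gcd = 1
  have hkpos : 0 < (orbitOf α p).ncard := ncard_orbitOf_pos α p
  have hnpos : 0 < (orbitOf α v).ncard := ncard_orbitOf_pos α v
  have hgcd1 : Nat.gcd (orbitOf α p).ncard (orbitOf α v).ncard = 1 := by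
    have hpos : 0 < Nat.gcd (orbitOf α p).ncard (orbitOf α v).ncard :=
      Nat.gcd_pos_of_pos_left _ hkpos
    omega
  -- index bookkeeping
  have hdvd : T.index ∣ (S ⊓ U).index := Subgroup.index_dvd_of_le hSUT
  have hrel : (S ⊓ U).relIndex U * U.index = (S ⊓ U).index :=
    Subgroup.relIndex_mul_index inf_le_right
  set r := (S ⊓ U).relIndex U with hr
  have hrS : r = S.relIndex U := Subgroup.inf_relIndex_right S U
  have hrle : r ≤ S.index := by
    rw [hrS, ← Subgroup.relIndex_top_right S]
    refine Subgroup.relIndex_le_of_le_right le_top ?_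
    rw [Subgroup.relIndex_top_right]
    exact Subgroup.index_ne_zero_of_finite
  have hrne : r ≠ 0 := by
    intro h0
    rw [h0, zero_mul] at hrel
    have : (S ⊓ U).index ≠ 0 :=
      @Subgroup.index_ne_zero_of_finite _ _ _ (Quotient.finite _)
    exact this hrel.symm
  -- n ∣ r * k with gcd(k, n) = 1
  have hkey : T.index ∣ r * U.index := by rw [hrel]; exact hdvd
  have hco : Nat.Coprime T.index U.index := by
    have : Nat.gcd U.index T.index = 1 := by
      rw [← ncard_orbitOf_eq_index, ← ncard_orbitOf_eq_index]
      exact hgcd1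
    exact Nat.coprime_comm.mp this
  have hTr : T.index ∣ r := (Nat.Coprime.dvd_of_dvd_mul_right hco hkey)
  have hle : T.index ≤ r := Nat.le_of_dvd (Nat.pos_of_ne_zero hrne) hTr
  have : T.index ≤ S.index := le_trans hle hrle
  rw [← ncard_orbitOf_eq_index, ← ncard_orbitOf_eq_index] at this
  omega

/-- The vertex of the common divisor graph given by a non-trivial orbit. -/
def vtx (a : H) (h : 1 < (orbitOf α a).ncard) :
    {L : Set H // (∃ b : H, L = orbitOf α b) ∧ 1 < L.ncard} :=
  ⟨orbitOf α a, ⟨a, rfl⟩, h⟩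

lemma reach_of_gcd {a b : H} (ha : 1 < (orbitOf α a).ncard)
    (hb : 1 < (orbitOf α b).ncard)
    (hg : 1 < Nat.gcd (orbitOf α a).ncard (orbitOf α b).ncard) :
    (commonDivisorGraph α).Reachable (vtx α a ha) (vtx α b hb) := by
  by_cases h : orbitOf α a = orbitOf α b
  · have : vtx α a ha = vtx α b hb := Subtype.ext h
    rw [this]
  · refine SimpleGraph.Adj.reachable ?_
    rw [commonDivisorGraph, SimpleGraph.fromRel_adj]
    exact ⟨fun hh => h (congrArg Subtype.val hh), Or.inl hg⟩

/-- Key size computation: unreachable non-trivial orbits with `|O(a)| < |O(b)|`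
give `|O(a*b)| = |O(b)|`. -/
lemma ncard_orbit_mul {a b : H} (ha : 1 < (orbitOf α a).ncard)
    (hb : 1 < (orbitOf α b).ncard)
    (hlt : (orbitOf α a).ncard < (orbitOf α b).ncard)
    (hnr : ¬ (commonDivisorGraph α).Reachable (vtx α a ha) (vtx α b hb)) :
    (orbitOf α (a * b)).ncard = (orbitOf α b).ncard := by
  set k := (orbitOf α (a * b)).ncard with hk
  set n := (orbitOf α b).ncard with hn
  have h1 : 1 < Nat.gcd k n := master α a b (a * b) (Or.inl rfl) hlt
  have hk1 : 1 < k := by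
    have h2 := Nat.gcd_dvd_left k n
    have hkpos : 0 < k := ncard_orbitOf_pos α _
    have := Nat.le_of_dvd hkpos h2
    omega
  rcases lt_trichotomy k n with hlt2 | heq | hgt
  · -- apply master to (a*b) * b⁻¹ = a
    exfalso
    have hb' : (orbitOf α b⁻¹).ncard = n := ncard_orbitOf_inv α b
    have hmain := master α (a * b) b⁻¹ a (Or.inl (by group))
      (by rw [hb']; exact hlt2)
    rw [hb'] at hmain
    exact hnr (reach_of_gcd α ha hb hmain)
  · exact heq
  · -- apply master to (a*b) * b⁻¹ = a with b⁻¹ as the small factor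
    exfalso
    have hb' : (orbitOf α b⁻¹).ncard = n := ncard_orbitOf_inv α b
    have hmain := master α b⁻¹ (a * b) a (Or.inr (by group))
      (by rw [hb']; exact hgt)
    -- 1 < gcd |O(a)| k : vtx a reachable to vtx (a*b)
    have hr1 : (commonDivisorGraph α).Reachable (vtx α a ha) (vtx α (a * b) hk1) :=
      reach_of_gcd α ha hk1 hmain
    have hr2 : (commonDivisorGraph α).Reachable (vtx α (a * b) hk1) (vtx α b hb) :=
      reach_of_gcd α hk1 hb h1
    exact hnr (hr1.trans hr2)

/-- Transitivity of the diagonal action on the product of two coprime orbits. -/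
lemma exists_g_pair {a b : H}
    (hco : Nat.Coprime (orbitOf α a).ncard (orbitOf α b).ncard) :
    ∀ a' ∈ orbitOf α a, ∀ b' ∈ orbitOf α b, ∃ g : G, α g a = a' ∧ α g b = b' := by
  letI : MulAction G H := MulAction.compHom H α
  have horb : ∀ c : H, orbitOf α c = MulAction.orbit G c := fun _ => rfl
  -- stabilizer of the pair
  have hstab : MulAction.stabilizer G (a, b) =
      MulAction.stabilizer G a ⊓ MulAction.stabilizer G b := by
    ext g
    simp only [MulAction.mem_stabilizer_iff, Subgroup.mem_inf, Prod.smul_mk, Prod.mk.injEq]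
  have hstab_a : stab α a = MulAction.stabilizer G a := by ext g; exact Iff.rfl
  have hstab_b : stab α b = MulAction.stabilizer G b := by ext g; exact Iff.rfl
  set m := (orbitOf α a).ncard with hm
  set n := (orbitOf α b).ncard with hn
  -- the orbit of the pair
  set P := MulAction.orbit G (a, b) with hP
  have hPcard : Nat.card P = (MulAction.stabilizer G (a, b)).index := by
    rw [Nat.card_congr (MulAction.orbitEquivQuotientStabilizer G (a, b)),
      Subgroup.index_eq_card]
  have hmdvd : m ∣ Nat.card P := by
    rw [hPcard, hm, ncard_orbitOf_eq_index, hstab_a]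
    exact Subgroup.index_dvd_of_le (hstab ▸ inf_le_left)
  have hndvd : n ∣ Nat.card P := by
    rw [hPcard, hn, ncard_orbitOf_eq_index, hstab_b]
    exact Subgroup.index_dvd_of_le (hstab ▸ inf_le_right)
  have hmndvd : m * n ∣ Nat.card P := Nat.Coprime.mul_dvd_of_dvd_of_dvd hco hmdvd hndvd
  -- P ⊆ O(a) ×ˢ O(b)
  have hsub : P ⊆ (orbitOf α a) ×ˢ (orbitOf α b) := by
    rintro ⟨x, y⟩ ⟨g, hg⟩
    have hg' : (α g a, α g b) = (x, y) := hg
    rw [Prod.mk.injEq] at hg'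
    exact ⟨⟨g, hg'.1⟩, ⟨g, hg'.2⟩⟩
  have hprodcard : ((orbitOf α a) ×ˢ (orbitOf α b)).ncard = m * n := by
    rw [← Nat.card_coe_set_eq, Nat.card_congr (Equiv.Set.prod _ _), Nat.card_prod,
      Nat.card_coe_set_eq, Nat.card_coe_set_eq]
  have hPle : P.ncard ≤ m * n := by
    rw [← hprodcard]
    exact Set.ncard_le_ncard hsub (Set.toFinite _)
  have hPpos : 0 < P.ncard :=
    (Set.ncard_pos (Set.toFinite _)).mpr ⟨(a, b), MulAction.mem_orbit_self _⟩
  have hPcard' : P.ncard = m * n := by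
    have h1 : m * n ∣ P.ncard := by rwa [Nat.card_coe_set_eq] at hmndvd
    have h2 : m * n ≤ P.ncard := Nat.le_of_dvd hPpos h1
    omega
  have hPeq : P = (orbitOf α a) ×ˢ (orbitOf α b) :=
    Set.eq_of_subset_of_ncard_le hsub (by rw [hPcard', hprodcard]) (Set.toFinite _)
  intro a' ha' b' hb'
  have : (a', b') ∈ P := by rw [hPeq]; exact ⟨ha', hb'⟩
  obtain ⟨g, hg⟩ := this
  rw [Prod.ext_iff] at hg
  exact ⟨g, hg.1, hg.2⟩

/-- The key structural lemma: `a⁻¹ * a'` maps `O(b)` into itself. -/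
lemma key_mem {a b : H} (ha : 1 < (orbitOf α a).ncard)
    (hb : 1 < (orbitOf α b).ncard)
    (hlt : (orbitOf α a).ncard < (orbitOf α b).ncard)
    (hco : Nat.Coprime (orbitOf α a).ncard (orbitOf α b).ncard)
    (hnr : ¬ (commonDivisorGraph α).Reachable (vtx α a ha) (vtx α b hb)) :
    ∀ a' ∈ orbitOf α a, ∀ b' ∈ orbitOf α b, (a⁻¹ * a') * b' ∈ orbitOf α b := by
  have himg : ∀ a' ∈ orbitOf α a,
      (fun x => a' * x) '' orbitOf α b = orbitOf α (a * b) := by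
    intro a' ha'
    have hsub : (fun x => a' * x) '' orbitOf α b ⊆ orbitOf α (a * b) := by
      rintro y ⟨b', hb', rfl⟩
      obtain ⟨g, hg1, hg2⟩ := exists_g_pair α hco a' ha' b' hb'
      refine ⟨g, ?_⟩
      show α g (a * b) = a' * b'
      rw [map_mul, hg1, hg2]
    refine Set.eq_of_subset_of_ncard_le hsub ?_ (Set.toFinite _)
    rw [ncard_orbit_mul α ha hb hlt hnr,
      Set.ncard_image_of_injective _ (mul_right_injective a')]
  intro a' ha' b' hb'
  have h1 : a' * b' ∈ orbitOf α (a * b) := by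
    rw [← himg a' ha']
    exact ⟨b', hb', rfl⟩
  rw [← himg a (mem_orbitOf_self α a)] at h1
  obtain ⟨b'', hb'', hb''eq⟩ := h1
  have : (a⁻¹ * a') * b' = b'' := by
    rw [mul_assoc, ← hb''eq, ← mul_assoc, inv_mul_cancel, one_mul]
  rwa [this]

/-- The setwise left-multiplication stabilizer of an orbit. -/
def W (b : H) : Subgroup H where
  carrier := {h | ∀ b' ∈ orbitOf α b, h * b' ∈ orbitOf α b}
  one_mem' := by intro b' hb'; simpa using hb'
  mul_mem' := by
    intro h1 h2 hh1 hh2 b' hb'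
    rw [mul_assoc]
    exact hh1 _ (hh2 _ hb')
  inv_mem' := by
    intro h hh
    intro b' hb'
    -- h * · maps O(b) onto O(b)
    have himg : (fun x => h * x) '' orbitOf α b = orbitOf α b := by
      refine Set.eq_of_subset_of_ncard_le ?_ ?_ (Set.toFinite _)
      · rintro y ⟨b'', hb'', rfl⟩
        exact hh _ hb''
      · rw [Set.ncard_image_of_injective _ (mul_right_injective h)]
    rw [← himg] at hb'
    obtain ⟨b'', hb'', hb''eq⟩ := hb'
    have : h⁻¹ * b' = b'' := by rw [← hb''eq, ← mul_assoc, inv_mul_cancel, one_mul]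
    rwa [this]

/-- A subgroup whose left multiplication preserves a finite set has cardinality
dividing the cardinality of the set. -/
lemma card_dvd_of_invariant (D : Subgroup H) (s : Set H)
    (hs : ∀ d ∈ D, ∀ x ∈ s, d * x ∈ s) : Nat.card D ∣ s.ncard := by
  suffices h : ∀ n : ℕ, ∀ s : Set H, (∀ d ∈ D, ∀ x ∈ s, d * x ∈ s) → s.ncard = n →
      Nat.card D ∣ n by
    exact h s.ncard s hs rfl
  intro n
  induction n using Nat.strong_induction_on with
  | _ n ih =>
    intro s hs hn
    rcases s.eq_empty_or_nonempty with rfl | ⟨x0, hx0⟩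
    · rw [Set.ncard_empty] at hn
      rw [← hn]
      exact dvd_zero _
    · by_cases hn0 : n = 0
      · simp [hn0]
      have hDcard : (D : Set H).ncard = Nat.card D := by
        rw [← Nat.card_coe_set_eq]
        rfl
      set c := (fun d => d * x0) '' (D : Set H) with hc
      have hcs : c ⊆ s := by
        rintro y ⟨d, hd, rfl⟩
        exact hs d hd x0 hx0
      have hccard : c.ncard = Nat.card D := by
        rw [hc, Set.ncard_image_of_injective _ (mul_left_injective x0), hDcard]
      have hcpos : 0 < Nat.card D := Nat.card_pos
      set s' := s \ c with hs'
      have hs'inv : ∀ d ∈ D, ∀ x ∈ s', d * x ∈ s' := by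
        rintro d hd x ⟨hxs, hxc⟩
        refine ⟨hs d hd x hxs, ?_⟩
        rintro ⟨d', hd', heq⟩
        apply hxc
        refine ⟨d⁻¹ * d', mul_mem (inv_mem hd) hd', ?_⟩
        show d⁻¹ * d' * x0 = x
        have heq' : d' * x0 = d * x := heq
        rw [mul_assoc, heq', ← mul_assoc, inv_mul_cancel, one_mul]
      have hs'card : s'.ncard = n - Nat.card D := by
        rw [hs', Set.ncard_diff hcs (Set.toFinite _), hccard, hn]
      have hlt : s'.ncard < n := by
        rw [hs'card]
        have hle : Nat.card D ≤ n := by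
          rw [← hn, ← hccard]
          exact Set.ncard_le_ncard hcs (Set.toFinite _)
        omega
      have hdvd' : Nat.card D ∣ s'.ncard := ih _ hlt s' hs'inv rfl
      have hsum : s'.ncard + c.ncard = s.ncard :=
        Set.ncard_diff_add_ncard_of_subset hcs (Set.toFinite _)
      rw [hccard, hn] at hsum
      have : n = s'.ncard + Nat.card D := hsum.symm
      rw [this]
      exact Nat.dvd_add hdvd' dvd_rfl

/-- Kernel contradiction: three pairwise unreachable orbits are impossible. -/
lemma kernel {a b c : H} (ha : 1 < (orbitOf α a).ncard)
    (hb : 1 < (orbitOf α b).ncard) (hc : 1 < (orbitOf α c).ncard)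
    (hab : (orbitOf α a).ncard < (orbitOf α b).ncard)
    (hac : (orbitOf α a).ncard < (orbitOf α c).ncard)
    (hcoab : Nat.Coprime (orbitOf α a).ncard (orbitOf α b).ncard)
    (hcoac : Nat.Coprime (orbitOf α a).ncard (orbitOf α c).ncard)
    (hcobc : Nat.Coprime (orbitOf α b).ncard (orbitOf α c).ncard)
    (hnrb : ¬ (commonDivisorGraph α).Reachable (vtx α a ha) (vtx α b hb))
    (hnrc : ¬ (commonDivisorGraph α).Reachable (vtx α a ha) (vtx α c hc)) :
    False := by
  obtain ⟨a', ha', hane⟩ := Set.exists_ne_of_one_lt_ncard ha a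
  set t := a⁻¹ * a' with ht
  have htne : t ≠ 1 := by
    intro h
    have h2 : a⁻¹ * a' = 1 := by rw [← ht]; exact h
    exact hane (inv_mul_eq_one.mp h2).symm
  have htb : t ∈ W α b := fun b' hb' => key_mem α ha hb hab hcoab hnrb a' ha' b' hb'
  have htc : t ∈ W α c := fun c' hc' => key_mem α ha hc hac hcoac hnrc a' ha' c' hc'
  set D := W α b ⊓ W α c with hD
  have hdvdb : Nat.card D ∣ (orbitOf α b).ncard :=
    card_dvd_of_invariant D (orbitOf α b)
      (fun d hd x hx => (Subgroup.mem_inf.mp hd).1 x hx)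
  have hdvdc : Nat.card D ∣ (orbitOf α c).ncard :=
    card_dvd_of_invariant D (orbitOf α c)
      (fun d hd x hx => (Subgroup.mem_inf.mp hd).2 x hx)
  have hD1 : Nat.card D = 1 := Nat.eq_one_of_dvd_coprimes hcobc hdvdb hdvdc
  have : D = ⊥ := Subgroup.card_eq_one.mp hD1
  have htD : t ∈ D := ⟨htb, htc⟩
  rw [this, Subgroup.mem_bot] at htD
  exact htne htD

lemma coprime_of_not_reach {a b : H} (ha : 1 < (orbitOf α a).ncard)
    (hb : 1 < (orbitOf α b).ncard)
    (hnr : ¬ (commonDivisorGraph α).Reachable (vtx α a ha) (vtx α b hb)) :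
    Nat.Coprime (orbitOf α a).ncard (orbitOf α b).ncard := by
  by_contra hco
  have hpos : 0 < Nat.gcd (orbitOf α a).ncard (orbitOf α b).ncard :=
    Nat.gcd_pos_of_pos_left _ (ncard_orbitOf_pos α a)
  have h1 : 1 < Nat.gcd (orbitOf α a).ncard (orbitOf α b).ncard := by
    rcases Nat.lt_or_ge 1 (Nat.gcd (orbitOf α a).ncard (orbitOf α b).ncard) with h | h
    · exact h
    · exact absurd (by omega : Nat.gcd (orbitOf α a).ncard (orbitOf α b).ncard = 1) hco
  exact hnr (reach_of_gcd α ha hb h1)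

end CDGAux

theorem stmt_5 {G H : Type*} [Group G] [Group H] [Finite G] [Finite H]
    (α : G →* MulAut H)
    (hpf : ∀ p : ℕ, p.Prime → (p ∣ Nat.card G ↔ p ∣ Nat.card H)) :
    Nat.card (commonDivisorGraph α).ConnectedComponent ≤ 2 := by
  classical
  by_contra hgt
  push_neg at hgt
  -- get three distinct connected components
  letI : Fintype (commonDivisorGraph α).ConnectedComponent := Fintype.ofFinite _
  rw [Nat.card_eq_fintype_card] at hgt
  have h3 : 2 < (Finset.univ : Finset (commonDivisorGraph α).ConnectedComponent).card := by
    simpa using hgt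
  rw [Finset.two_lt_card_iff] at h3
  obtain ⟨c1, c2, c3, -, -, -, h12, h13, h23⟩ := h3
  obtain ⟨v1, hv1⟩ := c1.exists_rep
  obtain ⟨v2, hv2⟩ := c2.exists_rep
  obtain ⟨v3, hv3⟩ := c3.exists_rep
  have hnr12 : ¬ (commonDivisorGraph α).Reachable v1 v2 := by
    intro h; exact h12 (by rw [← hv1, ← hv2]; exact SimpleGraph.ConnectedComponent.eq.mpr h)
  have hnr13 : ¬ (commonDivisorGraph α).Reachable v1 v3 := by
    intro h; exact h13 (by rw [← hv1, ← hv3]; exact SimpleGraph.ConnectedComponent.eq.mpr h)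
  have hnr23 : ¬ (commonDivisorGraph α).Reachable v2 v3 := by
    intro h; exact h23 (by rw [← hv2, ← hv3]; exact SimpleGraph.ConnectedComponent.eq.mpr h)
  obtain ⟨L1, ⟨a1, rfl⟩, h1⟩ := v1
  obtain ⟨L2, ⟨a2, rfl⟩, h2⟩ := v2
  obtain ⟨L3, ⟨a3, rfl⟩, h3'⟩ := v3
  -- rewrite as vtx
  have e1 : (⟨orbitOf α a1, ⟨a1, rfl⟩, h1⟩ :
      {L : Set H // (∃ a : H, L = orbitOf α a) ∧ 1 < L.ncard}) = CDGAux.vtx α a1 h1 := rfl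
  have e2 : (⟨orbitOf α a2, ⟨a2, rfl⟩, h2⟩ :
      {L : Set H // (∃ a : H, L = orbitOf α a) ∧ 1 < L.ncard}) = CDGAux.vtx α a2 h2 := rfl
  have e3 : (⟨orbitOf α a3, ⟨a3, rfl⟩, h3'⟩ :
      {L : Set H // (∃ a : H, L = orbitOf α a) ∧ 1 < L.ncard}) = CDGAux.vtx α a3 h3' := rfl
  rw [e1, e2] at hnr12
  rw [e1, e3] at hnr13
  rw [e2, e3] at hnr23
  set n1 := (orbitOf α a1).ncard with hn1
  set n2 := (orbitOf α a2).ncard with hn2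
  set n3 := (orbitOf α a3).ncard with hn3
  have hco12 : Nat.Coprime n1 n2 := CDGAux.coprime_of_not_reach α h1 h2 hnr12
  have hco13 : Nat.Coprime n1 n3 := CDGAux.coprime_of_not_reach α h1 h3' hnr13
  have hco23 : Nat.Coprime n2 n3 := CDGAux.coprime_of_not_reach α h2 h3' hnr23
  have hne12 : n1 ≠ n2 := by
    intro h
    rw [h] at hco12
    have hg1 : Nat.gcd n2 n2 = 1 := hco12
    rw [Nat.gcd_self] at hg1
    omega
  have hne13 : n1 ≠ n3 := by
    intro h
    rw [h] at hco13
    have hg1 : Nat.gcd n3 n3 = 1 := hco13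
    rw [Nat.gcd_self] at hg1
    omega
  have hne23 : n2 ≠ n3 := by
    intro h
    rw [h] at hco23
    have hg1 : Nat.gcd n3 n3 = 1 := hco23
    rw [Nat.gcd_self] at hg1
    omega
  have hcases : (n1 < n2 ∧ n1 < n3) ∨ (n2 < n1 ∧ n2 < n3) ∨ (n3 < n1 ∧ n3 < n2) := by
    omega
  rcases hcases with ⟨hlt1, hlt2⟩ | ⟨hlt1, hlt2⟩ | ⟨hlt1, hlt2⟩
  · exact CDGAux.kernel α h1 h2 h3' hlt1 hlt2 hco12 hco13 hco23 hnr12 hnr13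
  · exact CDGAux.kernel α h2 h1 h3' hlt1 hlt2 (Nat.coprime_comm.mp hco12) hco23 hco13
      (fun h => hnr12 h.symm) hnr23
  · exact CDGAux.kernel α h3' h1 h2 hlt1 hlt2 (Nat.coprime_comm.mp hco13)
      (Nat.coprime_comm.mp hco23) hco12 (fun h => hnr13 h.symm) (fun h => hnr23 h.symm)
end

section
/- Let p be a prime number and let G and H be finite p-groups, with α : G →* MulAut H an action of G on H by automorphisms. Then p − 1 divides the total number of non-trivial orbits of the action (equivalently, the number of vertices of the common divisor graph C(α) is a multiple of p − 1). -/
private lemma modeq_sum_aux {ι : Type*} (s : Finset ι) {n : ℕ} {f g : ι → ℕ}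
    (h : ∀ i ∈ s, f i ≡ g i [MOD n]) : (∑ i ∈ s, f i) ≡ ∑ i ∈ s, g i [MOD n] := by
  classical
  induction s using Finset.induction with
  | empty => rfl
  | insert _ _ hx ih =>
    rw [Finset.sum_insert hx, Finset.sum_insert hx]
    exact (h _ (Finset.mem_insert_self _ _)).add
      (ih fun i hi => h i (Finset.mem_insert_of_mem hi))

theorem stmt_10 {G H : Type*} [Group G] [Group H] [Finite G] [Finite H]
    {p : ℕ} (hp : p.Prime) (hG : IsPGroup p G) (hH : IsPGroup p H)
    (α : G →* MulAut H) :
    p - 1 ∣ Nat.card {L : Set H // (∃ a : H, L = orbitOf α a) ∧ 1 < L.ncard} := by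
  classical
  letI : MulDistribMulAction G H := MulDistribMulAction.compHom H α
  have horb : ∀ a : H, orbitOf α a = MulAction.orbit G a := fun a => rfl
  -- basic modular facts
  have hp1 : 1 ≡ p [MOD p - 1] := by
    rw [Nat.modEq_iff_dvd' hp.one_lt.le]
  have hpow : ∀ k : ℕ, (p : ℕ) ^ k ≡ 1 [MOD p - 1] := fun k => by
    calc p ^ k ≡ 1 ^ k [MOD p - 1] := (hp1.symm).pow k
    _ = 1 := one_pow k
  haveI : Fact p.Prime := ⟨hp⟩
  haveI : Fintype G := Fintype.ofFinite G
  haveI : Fintype H := Fintype.ofFinite H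
  obtain ⟨n, hn⟩ := (IsPGroup.iff_card (p := p) (G := G)).mp hG
  obtain ⟨m, hm⟩ := (IsPGroup.iff_card (p := p) (G := H)).mp hH
  rw [Nat.card_eq_fintype_card] at hn hm
  set Ω := MulAction.orbitRel.Quotient G H with hΩ
  haveI : Fintype Ω := Fintype.ofFinite Ω
  -- every orbit has p-power size
  have horbcard : ∀ a : H, Nat.card (MulAction.orbit G a) ≡ 1 [MOD p - 1] := by
    intro a
    have hdvd : Fintype.card (MulAction.orbit G a) ∣ Fintype.card G :=
      ⟨_, (MulAction.card_orbit_mul_card_stabilizer_eq_card_group G a).symm⟩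
    rw [hn] at hdvd
    obtain ⟨k, -, hk⟩ := (Nat.dvd_prime_pow hp).mp hdvd
    rw [Nat.card_eq_fintype_card, hk]
    exact hpow k
  -- card of the orbit space is 1 mod (p-1)
  have hΩcard : Fintype.card Ω ≡ 1 [MOD p - 1] := by
    have h1 : Fintype.card H = ∑ ω : Ω, Nat.card ω.orbit := by
      rw [Fintype.card_congr (MulAction.selfEquivSigmaOrbits' G H), Fintype.card_sigma]
      simp [Nat.card_eq_fintype_card]
      rfl
    have h2 : (∑ ω : Ω, Nat.card ω.orbit) ≡ ∑ _ω : Ω, 1 [MOD p - 1] := by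
      refine modeq_sum_aux _ fun ω _ => ?_
      rw [MulAction.orbitRel.Quotient.orbit_eq_orbit_out ω Quotient.out_eq']
      exact horbcard _
    have h3 : (∑ _ω : Ω, (1 : ℕ)) = Fintype.card Ω := by simp
    have h4 : Fintype.card H ≡ Fintype.card Ω [MOD p - 1] := by
      rw [h1, ← h3]; exact h2
    have hH1 : Fintype.card H ≡ 1 [MOD p - 1] := by rw [hm]; exact hpow m
    exact h4.symm.trans hH1
  -- the fixed-point subgroup
  set K : Subgroup H := FixedPoints.subgroup G H with hK
  have hKcard : Nat.card K ≡ 1 [MOD p - 1] := by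
    obtain ⟨r, hr⟩ := (IsPGroup.iff_card (p := p) (G := K)).mp (hH.to_subgroup K)
    rw [hr]
    exact hpow r
  -- the type of all orbits is equivalent to Ω
  have eΩ : Ω ≃ {L : Set H // ∃ a : H, L = orbitOf α a} := by
    refine Equiv.ofBijective (fun ω => ⟨ω.orbit, ?_⟩) ⟨?_, ?_⟩
    · induction ω using Quotient.inductionOn' with
      | h a => exact ⟨a, by rw [horb, MulAction.orbitRel.Quotient.orbit_mk]⟩
    · intro ω ω' h
      exact MulAction.orbitRel.Quotient.orbit_injective (congrArg Subtype.val h)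
    · rintro ⟨L, a, rfl⟩
      exact ⟨Quotient.mk'' a, by
        simp only [Subtype.mk.injEq, horb, MulAction.orbitRel.Quotient.orbit_mk]⟩
  -- orbit is a singleton iff the point is fixed
  have hfixorb : ∀ a : H, (∀ g : G, α g a = a) → orbitOf α a = {a} := by
    intro a ha
    apply Set.eq_singleton_iff_unique_mem.mpr
    exact ⟨⟨1, by simp⟩, by rintro x ⟨g, rfl⟩; exact ha g⟩
  have hsing : ∀ a : H, ¬ 1 < (orbitOf α a).ncard ↔ a ∈ K := by
    intro a
    have hfin : (orbitOf α a).Finite := Set.toFinite _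
    have hmem : a ∈ orbitOf α a := ⟨1, by simp⟩
    constructor
    · intro h
      have hpos : 0 < (orbitOf α a).ncard := (Set.ncard_pos hfin).mpr ⟨a, hmem⟩
      have h1 : (orbitOf α a).ncard = 1 := le_antisymm (not_lt.mp h) hpos
      obtain ⟨b, hb⟩ := Set.ncard_eq_one.mp h1
      have hab : a = b := by rw [hb] at hmem; exact hmem
      intro g
      have hx : α g a ∈ orbitOf α a := ⟨g, rfl⟩
      rw [hb, ← hab] at hx
      exact hx
    · intro hfix h
      rw [hfixorb a hfix, Set.ncard_singleton] at h
      exact lt_irrefl 1 h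
  -- trivial orbits are in bijection with K
  have eK : K ≃ {L : Set H // (∃ a : H, L = orbitOf α a) ∧ ¬ 1 < L.ncard} := by
    refine Equiv.ofBijective
      (fun a => ⟨{(a : H)}, ⟨(a : H), (hfixorb a a.2).symm⟩, by simp⟩) ⟨?_, ?_⟩
    · intro a b h
      exact Subtype.ext (Set.singleton_eq_singleton_iff.mp (congrArg Subtype.val h))
    · rintro ⟨L, ⟨b, rfl⟩, h2⟩
      have hb : b ∈ K := (hsing b).mp h2
      exact ⟨⟨b, hb⟩, Subtype.ext (hfixorb b hb).symm⟩
  -- split the orbits into nontrivial and trivial ones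
  have hsplit : Nat.card {L : Set H // ∃ a : H, L = orbitOf α a} =
      Nat.card {L : Set H // (∃ a : H, L = orbitOf α a) ∧ 1 < L.ncard} +
      Nat.card {L : Set H // (∃ a : H, L = orbitOf α a) ∧ ¬ 1 < L.ncard} := by
    rw [← Nat.card_sum]
    refine Nat.card_congr ?_
    refine ((Equiv.sumCompl fun x : {L : Set H // ∃ a : H, L = orbitOf α a} =>
      1 < x.1.ncard).symm).trans (Equiv.sumCongr ?_ ?_)
    · exact Equiv.subtypeSubtypeEquivSubtypeInter
        (fun L : Set H => ∃ a : H, L = orbitOf α a) (fun L => 1 < L.ncard)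
    · exact Equiv.subtypeSubtypeEquivSubtypeInter
        (fun L : Set H => ∃ a : H, L = orbitOf α a) (fun L => ¬ 1 < L.ncard)
  set t := Nat.card {L : Set H // (∃ a : H, L = orbitOf α a) ∧ 1 < L.ncard} with ht
  have h5 : t + Nat.card K ≡ 1 [MOD p - 1] := by
    have := Nat.card_congr eK
    rw [this]
    have h6 : Nat.card {L : Set H // ∃ a : H, L = orbitOf α a} = Fintype.card Ω := by
      rw [← Nat.card_congr eΩ, Nat.card_eq_fintype_card]
    rw [← hsplit, h6]
    exact hΩcard
  have h7 : t + 1 ≡ 0 + 1 [MOD p - 1] := by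
    have := (Nat.ModEq.add_left t hKcard).symm.trans h5
    simpa using this
  have h8 : t ≡ 0 [MOD p - 1] := Nat.ModEq.add_right_cancel' 1 h7
  exact (Nat.modEq_zero_iff_dvd).mp h8
end

section
/- Let p > q be prime numbers with p ≡ 1 (mod q), let H be a group of order pq and G a finite group whose order divides p²q², and let α : G →* MulAut H be an action of G on H by automorphisms. If the fixed-point subgroup H^G has order p, then every non-trivial orbit of the action has size exactly p, and the number of non-trivial orbits is exactly q − 1. -/
open Pointwise

theorem stmt_11 {G H : Type*} [Group G] [Group H] [Finite G] [Finite H]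
    {p q : ℕ} (hp : p.Prime) (hq : q.Prime) (hlt : q < p) (hmod : p ≡ 1 [MOD q])
    (hH : Nat.card H = p * q) (hG : Nat.card G ∣ p ^ 2 * q ^ 2)
    (α : G →* MulAut H)
    (hfix : Nat.card {h : H // ∀ g : G, α g h = h} = p) :
    (∀ a : H, 1 < (orbitOf α a).ncard → (orbitOf α a).ncard = p) ∧
    Nat.card {L : Set H // (∃ a : H, L = orbitOf α a) ∧ 1 < L.ncard} = q - 1 := by
  haveI : Fact p.Prime := ⟨hp⟩
  haveI : Fact q.Prime := ⟨hq⟩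
  -- the fixed subgroup
  let F : Subgroup H :=
    { carrier := {h | ∀ g : G, α g h = h}
      one_mem' := fun g => map_one (α g)
      mul_mem' := fun {x y} hx hy g => by rw [map_mul, hx g, hy g]
      inv_mem' := fun {x} hx g => by rw [map_inv, hx g] }
  have hmemF : ∀ x : H, x ∈ F ↔ ∀ g : G, α g x = x := fun x => Iff.rfl
  have hcardF : Nat.card F = p := hfix
  have hindex : F.index = q := by
    have h := Subgroup.card_mul_index F
    rw [hcardF, hH] at h
    exact Nat.eq_of_mul_eq_mul_left hp.pos h
  -- F is normal (it is the unique Sylow p-subgroup)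
  have hfactz : (Nat.card H).factorization p = 1 := by
    rw [hH, Nat.factorization_mul hp.pos.ne' hq.pos.ne', Finsupp.add_apply,
      hp.factorization, hq.factorization, Finsupp.single_apply, Finsupp.single_apply,
      if_pos rfl, if_neg hlt.ne]
    rfl
  have hcardF' : Nat.card F = p ^ (Nat.card H).factorization p := by
    rw [hfactz, pow_one, hcardF]
  let P : Sylow p H := Sylow.ofCard F hcardF'
  have hPF : (P : Subgroup H) = F := Sylow.coe_ofCard F hcardF'
  have hsylow1 : Nat.card (Sylow p H) = 1 := by
    have hdvd : Nat.card (Sylow p H) ∣ q := by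
      have := P.card_dvd_index
      rwa [hPF, hindex] at this
    rcases (Nat.Prime.eq_one_or_self_of_dvd hq _ hdvd) with h | h
    · exact h
    · exfalso
      have hm := card_sylow_modEq_one p H
      rw [h] at hm
      have : q % p = 1 % p := hm
      rw [Nat.mod_eq_of_lt hlt, Nat.mod_eq_of_lt hp.one_lt] at this
      exact hq.one_lt.ne' this
  haveI : Subsingleton (Sylow p H) :=
    (Nat.card_eq_one_iff_unique.mp hsylow1).1
  haveI hFnormal : F.Normal := by
    have htop : Subgroup.normalizer ((P : Subgroup H) : Set H) = ⊤ := by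
      rw [eq_top_iff]
      intro g _
      exact Sylow.smul_eq_iff_mem_normalizer.mp (Subsingleton.elim _ _)
    rw [hPF] at htop
    exact Subgroup.normalizer_eq_top_iff.mp htop
  -- the quotient
  have hcardQ : Nat.card (H ⧸ F) = q := hindex
  haveI : IsCyclic (H ⧸ F) := isCyclic_of_prime_card hcardQ
  have hautcard : Nat.card (MulAut (H ⧸ F)) = q - 1 := by
    rw [IsCyclic.card_mulAut, hcardQ, Nat.totient_prime hq]
  -- induced maps on the quotient
  have hle : ∀ g : G, F ≤ F.comap ((α g).toMonoidHom) := by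
    intro g x hx
    have hxg : α g x = x := hx g
    show α g x ∈ F
    rw [hxg]; exact hx
  let φ : G → ((H ⧸ F) →* (H ⧸ F)) := fun g =>
    QuotientGroup.map F F ((α g).toMonoidHom) (hle g)
  have hφ_mk : ∀ (g : G) (a : H), φ g ((a : H ⧸ F)) = ((α g a : H) : H ⧸ F) :=
    fun g a => QuotientGroup.map_mk F F _ _ a
  have hφ_comp : ∀ g₁ g₂ : G, (φ g₁).comp (φ g₂) = φ (g₁ * g₂) := by
    intro g₁ g₂
    apply MonoidHom.ext
    intro x
    induction x using QuotientGroup.induction_on with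
    | H a =>
      simp only [MonoidHom.comp_apply, hφ_mk, map_mul, MulAut.mul_apply]
  have hφ_one : φ 1 = MonoidHom.id (H ⧸ F) := by
    apply MonoidHom.ext
    intro x
    induction x using QuotientGroup.induction_on with
    | H a => simp only [hφ_mk, map_one, MulAut.one_apply, MonoidHom.id_apply]
  let β : G →* MulAut (H ⧸ F) :=
    { toFun := fun g => MonoidHom.toMulEquiv (φ g) (φ g⁻¹)
        (by rw [hφ_comp, inv_mul_cancel, hφ_one])
        (by rw [hφ_comp, mul_inv_cancel, hφ_one])
      map_one' := by
        apply MulEquiv.ext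
        intro x
        show φ 1 x = x
        rw [hφ_one]; rfl
      map_mul' := by
        intro g₁ g₂
        apply MulEquiv.ext
        intro x
        show φ (g₁ * g₂) x = φ g₁ (φ g₂ x)
        rw [← hφ_comp]; rfl }
  -- β is trivial
  have hq1 : 1 ≤ q - 1 := by have := hq.two_le; omega
  have hcop : Nat.Coprime (q - 1) (p ^ 2 * q ^ 2) := by
    have hcp : Nat.Coprime (q - 1) p := by
      rw [Nat.coprime_comm]
      exact hp.coprime_iff_not_dvd.mpr fun hd =>
        absurd (Nat.le_of_dvd hq1 hd) (by omega)
    have hcq : Nat.Coprime (q - 1) q := by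
      rw [Nat.coprime_comm]
      exact hq.coprime_iff_not_dvd.mpr fun hd =>
        absurd (Nat.le_of_dvd hq1 hd) (by omega)
    exact Nat.Coprime.mul_right (hcp.pow_right 2) (hcq.pow_right 2)
  have hβ1 : ∀ g : G, β g = 1 := by
    intro g
    have h1 : orderOf (β g) ∣ q - 1 := hautcard ▸ orderOf_dvd_natCard (β g)
    have h2 : orderOf (β g) ∣ p ^ 2 * q ^ 2 :=
      (orderOf_map_dvd β g).trans ((orderOf_dvd_natCard g).trans hG)
    have : orderOf (β g) ∣ 1 := hcop ▸ Nat.dvd_gcd h1 h2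
    exact orderOf_eq_one_iff.mp (Nat.dvd_one.mp this)
  have key : ∀ (g : G) (a : H), a⁻¹ * α g a ∈ F := by
    intro g a
    have h0 : (β g) ((a : H ⧸ F)) = ((α g a : H) : H ⧸ F) := hφ_mk g a
    rw [hβ1 g, MulAut.one_apply] at h0
    exact QuotientGroup.eq.mp h0
  -- orbits of fixed points are singletons
  have horb_mem : ∀ a ∈ F, orbitOf α a = {a} := by
    intro a ha
    ext b
    constructor
    · rintro ⟨g, rfl⟩
      exact ha g
    · rintro rfl
      exact ⟨1, by simp⟩
  -- orbits of non-fixed points are the cosets of F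
  have horb : ∀ a : H, a ∉ F → orbitOf α a = a • (F : Set H) := by
    intro a ha
    let c : G →* F :=
      { toFun := fun g => ⟨a⁻¹ * α g a, key g a⟩
        map_one' := by
          apply Subtype.ext
          show a⁻¹ * α 1 a = 1
          rw [map_one, MulAut.one_apply, inv_mul_cancel]
        map_mul' := by
          intro g₁ g₂
          apply Subtype.ext
          show a⁻¹ * α (g₁ * g₂) a = (a⁻¹ * α g₁ a) * (a⁻¹ * α g₂ a)
          have hfix2 : α g₁ (a⁻¹ * α g₂ a) = a⁻¹ * α g₂ a := key g₂ a g₁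
          calc a⁻¹ * α (g₁ * g₂) a = a⁻¹ * α g₁ (α g₂ a) := by
                rw [map_mul, MulAut.mul_apply]
            _ = a⁻¹ * α g₁ (a * (a⁻¹ * α g₂ a)) := by rw [mul_inv_cancel_left]
            _ = a⁻¹ * (α g₁ a * α g₁ (a⁻¹ * α g₂ a)) := by rw [map_mul]
            _ = (a⁻¹ * α g₁ a) * (a⁻¹ * α g₂ a) := by rw [hfix2, mul_assoc] }
    have hrange : c.range = ⊤ := by
      have hdvd : Nat.card c.range ∣ p := hcardF ▸ Subgroup.card_subgroup_dvd_card c.range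
      rcases (Nat.Prime.eq_one_or_self_of_dvd hp _ hdvd) with h | h
      · exfalso
        apply ha
        have hbot : c.range = ⊥ := Subgroup.card_eq_one.mp h
        intro g
        have : c g ∈ c.range := ⟨g, rfl⟩
        rw [hbot, Subgroup.mem_bot] at this
        have h1 : a⁻¹ * α g a = 1 := congrArg Subtype.val this
        have := mul_eq_one_iff_inv_eq.mp h1
        rw [inv_inv] at this
        exact this.symm
      · exact Subgroup.eq_top_of_card_eq c.range (h.trans hcardF.symm)
    ext b
    constructor
    · rintro ⟨g, rfl⟩
      exact (mem_leftCoset_iff a).mpr (key g a)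
    · intro hb
      have hbF : a⁻¹ * b ∈ F := (mem_leftCoset_iff a).mp hb
      have : (⟨a⁻¹ * b, hbF⟩ : F) ∈ c.range := by rw [hrange]; trivial
      obtain ⟨g, hg⟩ := this
      have h1 : a⁻¹ * α g a = a⁻¹ * b := congrArg Subtype.val hg
      exact ⟨g, mul_left_cancel h1⟩
  have hncard : ∀ a : H, a ∉ F → (orbitOf α a).ncard = p := by
    intro a ha
    rw [horb a ha]
    have h1 : (F : Set H).ncard = p := by
      rw [← Nat.card_coe_set_eq]
      exact hcardF
    rw [← h1]
    exact Set.ncard_smul_set a (F : Set H)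
  constructor
  · intro a h1
    by_cases ha : a ∈ F
    · rw [horb_mem a ha, Set.ncard_singleton] at h1
      omega
    · exact hncard a ha
  · -- counting the nontrivial orbits
    have hout_not : ∀ x : {x : H ⧸ F // x ≠ 1}, (Quotient.out x.1) ∉ F := by
      intro x hmem
      exact x.2 (by rw [← QuotientGroup.out_eq' x.1, QuotientGroup.eq_one_iff]; exact hmem)
    let f : {x : H ⧸ F // x ≠ 1} →
        {L : Set H // (∃ a : H, L = orbitOf α a) ∧ 1 < L.ncard} := fun x =>
      ⟨orbitOf α (Quotient.out x.1), ⟨Quotient.out x.1, rfl⟩, by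
        rw [hncard _ (hout_not x)]; exact hp.one_lt⟩
    have hbij : Function.Bijective f := by
      constructor
      · intro x₁ x₂ hfx
        have h : orbitOf α (Quotient.out x₁.1) = orbitOf α (Quotient.out x₂.1) :=
          congrArg Subtype.val hfx
        rw [horb _ (hout_not x₁), horb _ (hout_not x₂)] at h
        have hm := (leftCoset_eq_iff F).mp h
        apply Subtype.ext
        rw [← QuotientGroup.out_eq' x₁.1, ← QuotientGroup.out_eq' x₂.1]
        exact QuotientGroup.eq.mpr hm
      · rintro ⟨L, ⟨a, rfl⟩, h1⟩
        have ha : a ∉ F := by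
          intro h
          rw [horb_mem a h, Set.ncard_singleton] at h1
          omega
        have hx1 : (QuotientGroup.mk a : H ⧸ F) ≠ 1 := by
          rw [Ne, QuotientGroup.eq_one_iff]; exact ha
        refine ⟨⟨QuotientGroup.mk a, hx1⟩, ?_⟩
        apply Subtype.ext
        show orbitOf α (Quotient.out ((QuotientGroup.mk a : H ⧸ F))) = orbitOf α a
        have houtm : (QuotientGroup.mk (Quotient.out ((QuotientGroup.mk a : H ⧸ F))) : H ⧸ F)
            = QuotientGroup.mk a := QuotientGroup.out_eq' _
        have hmem : (Quotient.out ((QuotientGroup.mk a : H ⧸ F)))⁻¹ * a ∈ F :=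
          QuotientGroup.eq.mp houtm
        have hout_notF : Quotient.out ((QuotientGroup.mk a : H ⧸ F)) ∉ F := by
          intro h
          apply ha
          have hin := mul_mem h hmem
          rwa [mul_inv_cancel_left] at hin
        rw [horb _ hout_notF, horb _ ha]
        exact (leftCoset_eq_iff F).mpr hmem
    have hcount : Nat.card {L : Set H // (∃ a : H, L = orbitOf α a) ∧ 1 < L.ncard}
        = Nat.card {x : H ⧸ F // x ≠ 1} :=
      Nat.card_congr (Equiv.ofBijective f hbij).symm
    rw [hcount]
    haveI : DecidablePred (fun x : H ⧸ F => x = 1) := fun _ => Classical.dec _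
    have hsum := Nat.card_congr (Equiv.sumCompl (fun x : H ⧸ F => x = 1))
    rw [Nat.card_sum] at hsum
    haveI : Unique {x : H ⧸ F // x = 1} := ⟨⟨⟨1, rfl⟩⟩, fun y => Subtype.ext y.2⟩
    rw [Nat.card_unique, hcardQ] at hsum
    have : Nat.card {x : H ⧸ F // ¬ x = 1} = Nat.card {x : H ⧸ F // x ≠ 1} := rfl
    omega
end

section
/- Let p > q be prime numbers with p ≡ 1 (mod q), let H be a group of order pq and G a finite group whose order divides p²q², and let α : G →* MulAut H be an action of G on H by automorphisms. If the fixed-point subgroup H^G has order q, then there are no orbits of size p, every non-trivial orbit has size q or q², and c(q) + q·c(q²) = p − 1, where c(m) denotes the number of orbits of size exactly m. -/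
lemma stmt12_aux_div {p q d : ℕ} (hp : p.Prime) (hq : q.Prime) (hlt : q < p)
    (hd : d ∣ p ^ 2 * q ^ 2) (hne : d ≠ 1) (hle : d + q ≤ p * q) :
    d = p ∨ d = q ∨ d = q ^ 2 := by
  have hp1 := hp.one_lt
  have hq1 := hq.one_lt
  have hd0 : d ≠ 0 := by
    rintro rfl
    rw [zero_dvd_iff] at hd
    have := hp.pos
    have := hq.pos
    nlinarith [hd, hp.pos, hq.pos]
  by_cases hpd : p ∣ d
  · obtain ⟨e, rfl⟩ := hpd
    have he : e ∣ p * q ^ 2 := by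
      have h2 : p * e ∣ p * (p * q ^ 2) := by rw [← mul_assoc, ← pow_two] at *; exact hd
      exact (mul_dvd_mul_iff_left hp.pos.ne').mp h2
    by_cases hpe : p ∣ e
    · obtain ⟨e', rfl⟩ := hpe
      have he' : 1 ≤ e' := by
        rcases Nat.eq_zero_or_pos e' with h | h
        · simp [h] at hd0
        · exact h
      have h1 : p * q < p * p := (Nat.mul_lt_mul_left hp.pos).mpr hlt
      have h2 : p * p * 1 ≤ p * p * e' := Nat.mul_le_mul_left _ he'
      have h3 : p * (p * e') = p * p * e' := by ring
      omega
    · have hcop : Nat.Coprime e p := (Nat.coprime_comm.mp (hp.coprime_iff_not_dvd.mpr hpe))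
      have heq : e ∣ q ^ 2 := hcop.dvd_of_dvd_mul_left he
      obtain ⟨m, hm, rfl⟩ := (Nat.dvd_prime_pow hq).mp heq
      interval_cases m
      · left; simp
      · exfalso; have : p * q ^ 1 + q ≤ p * q := hle; nlinarith
      · exfalso
        have h1 : p * q * 2 ≤ p * q * q := Nat.mul_le_mul_left _ hq1
        have h2 : p * q ^ 2 = p * q * q := by ring
        have h3 : 0 < p * q := Nat.mul_pos hp.pos hq.pos
        omega
  · have hcop : Nat.Coprime (p ^ 2) d := (hp.coprime_iff_not_dvd.mpr hpd).pow_left 2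
    have heq : d ∣ q ^ 2 := hcop.symm.dvd_of_dvd_mul_left hd
    obtain ⟨m, hm, rfl⟩ := (Nat.dvd_prime_pow hq).mp heq
    interval_cases m
    · simp at hne
    · right; left; simp
    · right; right; rfl

theorem stmt_12 {G H : Type*} [Group G] [Group H] [Finite G] [Finite H]
    {p q : ℕ} (hp : p.Prime) (hq : q.Prime) (hlt : q < p) (hmod : p ≡ 1 [MOD q])
    (hH : Nat.card H = p * q) (hG : Nat.card G ∣ p ^ 2 * q ^ 2)
    (α : G →* MulAut H)
    (hfix : Nat.card {h : H // ∀ g : G, α g h = h} = q) :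
    (∀ a : H, (orbitOf α a).ncard ≠ p) ∧
    (∀ a : H, 1 < (orbitOf α a).ncard →
      (orbitOf α a).ncard = q ∨ (orbitOf α a).ncard = q ^ 2) ∧
    Nat.card {L : Set H // (∃ a : H, L = orbitOf α a) ∧ L.ncard = q} +
      q * Nat.card {L : Set H // (∃ a : H, L = orbitOf α a) ∧ L.ncard = q ^ 2} = p - 1 := by
  classical
  have hp1 := hp.one_lt
  have hq1 := hq.one_lt
  letI : Fintype H := Fintype.ofFinite H
  letI : MulAction G H := MulAction.compHom H α
  have horb : ∀ a : H, orbitOf α a = MulAction.orbit G a := fun a => rfl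
  haveI : Finite (MulAction.orbitRel.Quotient G H) := Quotient.finite _
  letI : Fintype (MulAction.orbitRel.Quotient G H) := Fintype.ofFinite _
  set Ω := MulAction.orbitRel.Quotient G H with hΩdef
  set f : Ω → ℕ := fun ω => Nat.card ω.orbit with hfdef
  -- ncard of an orbit equals f of its class
  have hncard : ∀ a : H, (orbitOf α a).ncard = f (Quotient.mk'' a) := by
    intro a
    rw [horb, ← Nat.card_coe_set_eq]
    rfl
  -- sum of orbit sizes = |H|
  have hsum : ∑ ω : Ω, f ω = p * q := by
    rw [← hH, Nat.card_congr (MulAction.selfEquivSigmaOrbits' G H),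
      Nat.card_eq_fintype_card, Fintype.card_sigma]
    exact Finset.sum_congr rfl fun ω _ => by rw [hfdef]; simp [Nat.card_eq_fintype_card]
  -- each orbit size divides p^2 q^2
  have hdvd : ∀ ω : Ω, f ω ∣ p ^ 2 * q ^ 2 := by
    intro ω
    refine dvd_trans ?_ hG
    have h1 : f ω = Nat.card (G ⧸ MulAction.stabilizer G ω.out) := by
      rw [hfdef]
      simp only
      rw [MulAction.orbitRel.Quotient.orbit_eq_orbit_out ω Quotient.out_eq']
      exact Nat.card_congr (MulAction.orbitEquivQuotientStabilizer G ω.out)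
    rw [h1]
    exact Subgroup.card_quotient_dvd_card _
  -- each orbit is nonempty
  have hpos : ∀ ω : Ω, 1 ≤ f ω := by
    intro ω
    rw [hfdef]
    have : (MulAction.orbitRel.Quotient.orbit ω).Nonempty :=
      MulAction.orbitRel.Quotient.nonempty_orbit ω
    haveI : Nonempty ω.orbit := this.to_subtype
    exact Nat.one_le_iff_ne_zero.mpr Nat.card_pos.ne'
  -- number of singleton orbits = q
  have hfix1 : Nat.card {ω : Ω // f ω = 1} = q := by
    rw [← hfix]
    symm
    apply Nat.card_eq_of_bijective
      (fun h => ⟨Quotient.mk'' h.1, by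
        have horb1 : MulAction.orbit G h.1 = {h.1} := by
          apply Set.eq_singleton_iff_unique_mem.mpr
          refine ⟨MulAction.mem_orbit_self _, ?_⟩
          rintro x ⟨g, rfl⟩
          exact h.2 g
        rw [hfdef]
        simp only [MulAction.orbitRel.Quotient.orbit_mk, horb1, Nat.card_coe_set_eq,
          Set.ncard_singleton]⟩)
    constructor
    · rintro ⟨a, ha⟩ ⟨b, hb⟩ hab
      simp only [Subtype.mk.injEq] at hab ⊢
      rw [Quotient.eq''] at hab
      have : a ∈ MulAction.orbit G b := by rwa [← MulAction.orbitRel_apply]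
      obtain ⟨g, rfl⟩ := this
      exact hb g
    · rintro ⟨ω, hω⟩
      refine ⟨⟨ω.out, ?_⟩, ?_⟩
      · intro g
        have h1 : MulAction.orbitRel.Quotient.orbit ω = MulAction.orbit G ω.out :=
          MulAction.orbitRel.Quotient.orbit_eq_orbit_out ω Quotient.out_eq'
        have h2 : (MulAction.orbit G ω.out).ncard = 1 := by
          rw [← Nat.card_coe_set_eq, ← h1]
          exact hω
        obtain ⟨x, hx⟩ := Set.ncard_eq_one.mp h2
        have hmem : ω.out ∈ MulAction.orbit G ω.out := MulAction.mem_orbit_self _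
        have hgmem : α g ω.out ∈ MulAction.orbit G ω.out := MulAction.mem_orbit _ g
        rw [hx] at hmem hgmem
        simp only [Set.mem_singleton_iff] at hmem hgmem
        rw [hgmem, hmem]
      · exact Subtype.ext (Quotient.out_eq' ω)
  -- general correspondence between orbit-sets of size m and classes of size m
  have hLcard : ∀ m : ℕ,
      Nat.card {L : Set H // (∃ a : H, L = orbitOf α a) ∧ L.ncard = m} =
        Nat.card {ω : Ω // f ω = m} := by
    intro m
    symm
    apply Nat.card_eq_of_bijective (fun ω =>
      ⟨(ω.1 : Ω).orbit, ⟨ω.1.out, by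
          rw [horb, MulAction.orbitRel.Quotient.orbit_eq_orbit_out ω.1 Quotient.out_eq']⟩,
        by rw [← Nat.card_coe_set_eq]; exact ω.2⟩)
    constructor
    · rintro ⟨ω₁, h₁⟩ ⟨ω₂, h₂⟩ h
      simp only [Subtype.mk.injEq] at h ⊢
      exact MulAction.orbitRel.Quotient.orbit_injective h
    · rintro ⟨L, ⟨a, rfl⟩, hm⟩
      refine ⟨⟨Quotient.mk'' a, ?_⟩, ?_⟩
      · rw [← hncard a]; exact hm
      · apply Subtype.ext
        simp only
        rw [MulAction.orbitRel.Quotient.orbit_mk, horb]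
  -- counting setup
  set s1 : Finset Ω := Finset.univ.filter (fun ω => f ω = 1) with hs1
  set t1 : Finset Ω := Finset.univ.filter (fun ω => f ω ≠ 1) with ht1
  set sp : Finset Ω := t1.filter (fun ω => f ω = p) with hsp
  set t2 : Finset Ω := t1.filter (fun ω => f ω ≠ p) with ht2
  set sq : Finset Ω := t2.filter (fun ω => f ω = q) with hsq
  set t3 : Finset Ω := t2.filter (fun ω => f ω ≠ q) with ht3
  have hs1card : s1.card = q := by
    rw [← hfix1, Nat.card_eq_fintype_card, Fintype.card_subtype]
  have hsum1 : ∑ ω ∈ s1, f ω = q := by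
    rw [Finset.sum_congr rfl (fun ω hω => (Finset.mem_filter.mp hω).2),
      Finset.sum_const, smul_eq_mul, mul_one, hs1card]
  have hsplit0 : ∑ ω ∈ s1, f ω + ∑ ω ∈ t1, f ω = p * q := by
    rw [← hsum]
    exact Finset.sum_filter_add_sum_filter_not _ _ _
  -- bound on non-singleton orbits
  have hle : ∀ ω ∈ t1, f ω + q ≤ p * q := by
    intro ω hω
    have h1 : f ω ≤ ∑ ω' ∈ t1, f ω' := Finset.single_le_sum (fun _ _ => Nat.zero_le _) hω
    omega
  have hcases : ∀ ω ∈ t1, f ω = p ∨ f ω = q ∨ f ω = q ^ 2 := by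
    intro ω hω
    have hne1 : f ω ≠ 1 := (Finset.mem_filter.mp hω).2
    exact stmt12_aux_div hp hq hlt (hdvd ω) hne1 (hle ω hω)
  have hsplit1 : ∑ ω ∈ sp, f ω + ∑ ω ∈ t2, f ω = ∑ ω ∈ t1, f ω :=
    Finset.sum_filter_add_sum_filter_not _ _ _
  have hsplit2 : ∑ ω ∈ sq, f ω + ∑ ω ∈ t3, f ω = ∑ ω ∈ t2, f ω :=
    Finset.sum_filter_add_sum_filter_not _ _ _
  have hsumsp : ∑ ω ∈ sp, f ω = sp.card * p := by
    rw [Finset.sum_congr rfl (fun ω hω => (Finset.mem_filter.mp hω).2),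
      Finset.sum_const, smul_eq_mul]
  have hsumsq : ∑ ω ∈ sq, f ω = sq.card * q := by
    rw [Finset.sum_congr rfl (fun ω hω => (Finset.mem_filter.mp hω).2),
      Finset.sum_const, smul_eq_mul]
  have hsumt3 : ∑ ω ∈ t3, f ω = t3.card * q ^ 2 := by
    rw [Finset.sum_congr rfl (fun ω hω => ?_), Finset.sum_const, smul_eq_mul]
    have h1 := Finset.mem_filter.mp hω
    have h2 := Finset.mem_filter.mp h1.1
    rcases hcases ω h2.1 with h | h | h
    · exact absurd h h2.2
    · exact absurd h h1.2
    · exact h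
  -- the key equation
  have hkey : q + (sp.card * p + (sq.card * q + t3.card * q ^ 2)) = p * q := by
    omega
  -- q divides sp.card
  have hqsp : q ∣ sp.card * p := by
    have h1 : q ∣ q + (sq.card * q + t3.card * q ^ 2) :=
      Nat.dvd_add dvd_rfl (Nat.dvd_add (dvd_mul_left q sq.card) ⟨t3.card * q, by ring⟩)
    have h3 : q ∣ p * q := dvd_mul_left q p
    have h2 : sp.card * p = p * q - (q + (sq.card * q + t3.card * q ^ 2)) := by omega
    rw [h2]
    exact Nat.dvd_sub h3 h1
  have hcop : Nat.Coprime q p := (Nat.coprime_primes hq hp).mpr (Nat.ne_of_lt hlt)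
  have hqsp' : q ∣ sp.card := hcop.dvd_of_dvd_mul_right hqsp
  have hsp0 : sp.card = 0 := by
    have h2 : sp.card < q := by
      by_contra hcon
      push_neg at hcon
      have h4 : q * p ≤ sp.card * p := Nat.mul_le_mul_right _ hcon
      have h5 : q * p = p * q := mul_comm _ _
      omega
    exact Nat.eq_zero_of_dvd_of_lt hqsp' h2
  -- main arithmetic identity
  have hmain : sq.card + t3.card * q = p - 1 := by
    have e1 : q * (1 + sq.card + t3.card * q) = q + (sq.card * q + t3.card * q ^ 2) := by ring
    have e2 : q * p = p * q := mul_comm _ _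
    have e3 : sp.card * p = 0 := by rw [hsp0]; ring
    have h1 : q * (1 + sq.card + t3.card * q) = q * p := by omega
    have h2 : 1 + sq.card + t3.card * q = p := Nat.eq_of_mul_eq_mul_left hq.pos h1
    omega
  -- no orbit has size p
  have hnop : ∀ ω : Ω, f ω ≠ p := by
    intro ω hωp
    have hω1 : f ω ≠ 1 := by omega
    have hmem : ω ∈ sp := by
      rw [hsp, ht1]
      simp only [Finset.mem_filter, Finset.mem_univ, true_and]
      exact ⟨hω1, hωp⟩
    rw [Finset.card_eq_zero] at hsp0
    rw [hsp0] at hmem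
    exact absurd hmem (Finset.notMem_empty ω)
  refine ⟨?_, ?_, ?_⟩
  · intro a
    rw [hncard a]
    exact hnop _
  · intro a ha
    rw [hncard a] at ha ⊢
    set ω := (Quotient.mk'' a : Ω)
    have hω1 : f ω ≠ 1 := by omega
    have hmem : ω ∈ t1 := by
      rw [ht1]; simp only [Finset.mem_filter, Finset.mem_univ, true_and]; exact hω1
    rcases hcases ω hmem with h | h | h
    · exact absurd h (hnop ω)
    · exact Or.inl h
    · exact Or.inr h
  · rw [hLcard q, hLcard (q ^ 2)]
    have hsqeq : Nat.card {ω : Ω // f ω = q} = sq.card := by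
      rw [Nat.card_eq_fintype_card, Fintype.card_subtype]
      congr 1
      rw [hsq, ht2, ht1]
      ext ω
      simp only [Finset.mem_filter, Finset.mem_univ, true_and]
      constructor
      · intro h; exact ⟨⟨by omega, by omega⟩, h⟩
      · rintro ⟨⟨h1, h2⟩, h3⟩; exact h3
    have hq2 : q < q ^ 2 := by nlinarith
    have ht3eq : Nat.card {ω : Ω // f ω = q ^ 2} = t3.card := by
      rw [Nat.card_eq_fintype_card, Fintype.card_subtype]
      congr 1
      rw [ht3, ht2, ht1]
      ext ω
      simp only [Finset.mem_filter, Finset.mem_univ, true_and]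
      constructor
      · intro h
        exact ⟨⟨by omega, hnop ω⟩, by omega⟩
      · rintro ⟨⟨h1, h2⟩, h3⟩
        have hmem : ω ∈ t1 := by
          rw [ht1]; simp only [Finset.mem_filter, Finset.mem_univ, true_and]; exact h1
        rcases hcases ω hmem with h | h | h
        · exact absurd h h2
        · exact absurd h h3
        · exact h
    rw [hsqeq, ht3eq, mul_comm q t3.card]
    exact hmain
end

section
/- Let G and H be finite groups and let α : G →* MulAut H be an action of G on H by automorphisms. Suppose the action has exactly two non-trivial orbits, and that their cardinalities are coprime (so the common divisor graph C(α) consists of exactly two disconnected vertices). Then the fixed-point subgroup H^G is trivial, i.e. |H^G| = 1. -/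
/-- The subgroup of fixed points `H^G` of the action of `G` on `H` via `α`. -/
def fixedSubgroup {G H : Type*} [Group G] [Group H] (α : G →* MulAut H) : Subgroup H where
  carrier := {h : H | ∀ g : G, α g h = h}
  one_mem' := fun g => map_one (α g)
  mul_mem' := fun {a b} ha hb g => by rw [map_mul, ha g, hb g]
  inv_mem' := fun {a} ha g => by rw [map_inv, ha g]

lemma orbit_mul_fixed {G H : Type*} [Group G] [Group H] (α : G →* MulAut H)
    (c h : H) (hh : ∀ g : G, α g h = h) :
    orbitOf α (c * h) = (fun x => x * h) '' orbitOf α c := by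
  have hf : (fun g : G => α g (c * h)) = (fun x => x * h) ∘ fun g : G => α g c := by
    funext g; simp [hh g]
  unfold orbitOf
  rw [hf, Set.range_comp]

lemma card_dvd_of_right_inv {G H : Type*} [Group G] [Group H] [Finite H]
    (α : G →* MulAut H) (S : Set H)
    (hinv : ∀ h ∈ fixedSubgroup α, ∀ x ∈ S, x * h ∈ S) :
    Nat.card (fixedSubgroup α) ∣ S.ncard := by
  set F := fixedSubgroup α
  have hS : S = QuotientGroup.mk ⁻¹' (QuotientGroup.mk '' S : Set (H ⧸ F)) := by
    ext x
    constructor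
    · exact fun hx => ⟨x, hx, rfl⟩
    · rintro ⟨s, hs, hxs⟩
      have h1 : s⁻¹ * x ∈ F := (QuotientGroup.eq.mp hxs)
      have := hinv _ h1 s hs
      simpa using this
  have e := QuotientGroup.preimageMkEquivSubgroupProdSet F (QuotientGroup.mk '' S)
  have : S.ncard = Nat.card F * Nat.card (QuotientGroup.mk '' S : Set (H ⧸ F)) := by
    rw [← Nat.card_coe_set_eq]
    calc Nat.card S = Nat.card (QuotientGroup.mk ⁻¹' (QuotientGroup.mk '' S : Set (H ⧸ F))) := by
          rw [← hS]
      _ = Nat.card (F × (QuotientGroup.mk '' S : Set (H ⧸ F))) := Nat.card_congr e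
      _ = _ := Nat.card_prod _ _
  exact ⟨_, this⟩

theorem stmt_15 {G H : Type*} [Group G] [Group H] [Finite G] [Finite H]
    (α : G →* MulAut H) (a b : H)
    (hne : orbitOf α a ≠ orbitOf α b)
    (ha : 1 < (orbitOf α a).ncard) (hb : 1 < (orbitOf α b).ncard)
    (honly : ∀ c : H, 1 < (orbitOf α c).ncard →
      orbitOf α c = orbitOf α a ∨ orbitOf α c = orbitOf α b)
    (hco : Nat.Coprime (orbitOf α a).ncard (orbitOf α b).ncard) :
    Nat.card (fixedSubgroup α) = 1 := by
  have hmn : (orbitOf α a).ncard ≠ (orbitOf α b).ncard := by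
    intro h
    rw [Nat.Coprime, h, Nat.gcd_self] at hco
    omega
  -- orbit of c*h for fixed h has same cardinality as orbit of c
  have hcard : ∀ (c h : H), h ∈ fixedSubgroup α →
      (orbitOf α (c * h)).ncard = (orbitOf α c).ncard := by
    intro c h hh
    rw [orbit_mul_fixed α c h hh,
      Set.ncard_image_of_injective _ (mul_left_injective h)]
  -- the orbit of a is invariant under right multiplication by fixed elements
  have keyA : ∀ h ∈ fixedSubgroup α, ∀ x ∈ orbitOf α a, x * h ∈ orbitOf α a := by
    intro h hh x hx
    have hc : (orbitOf α (a * h)).ncard = (orbitOf α a).ncard := hcard a h hh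
    have horb : orbitOf α (a * h) = orbitOf α a := by
      rcases honly (a * h) (by rw [hc]; exact ha) with h1 | h1
      · exact h1
      · exact absurd (by rw [← hc, h1] : (orbitOf α a).ncard = (orbitOf α b).ncard) hmn
    obtain ⟨g, hg⟩ := hx
    have : x * h ∈ orbitOf α (a * h) := ⟨g, by simp [← hg, hh g]⟩
    rwa [horb] at this
  have keyB : ∀ h ∈ fixedSubgroup α, ∀ x ∈ orbitOf α b, x * h ∈ orbitOf α b := by
    intro h hh x hx
    have hc : (orbitOf α (b * h)).ncard = (orbitOf α b).ncard := hcard b h hh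
    have horb : orbitOf α (b * h) = orbitOf α b := by
      rcases honly (b * h) (by rw [hc]; exact hb) with h1 | h1
      · exact absurd (by rw [← hc, h1] : (orbitOf α b).ncard = (orbitOf α a).ncard) (Ne.symm hmn)
      · exact h1
    obtain ⟨g, hg⟩ := hx
    have : x * h ∈ orbitOf α (b * h) := ⟨g, by simp [← hg, hh g]⟩
    rwa [horb] at this
  have d1 := card_dvd_of_right_inv α _ keyA
  have d2 := card_dvd_of_right_inv α _ keyB
  exact Nat.eq_one_of_dvd_coprimes hco d1 d2
end

section
/- Let G and H be finite groups of the same order, and let α : G →* MulAut H be an action of G on H by automorphisms. Suppose the action has exactly two non-trivial orbits L₁ and L₂, and that |L₁| and |L₂| are coprime. Then |H| = 6, and the two non-trivial orbits have sizes 2 and 3. -/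
theorem arith_aux (a b f n : ℕ) (ha : 2 ≤ a) (hb : 2 ≤ b) (hab : a ≤ b)
    (hco : Nat.Coprime a b) (hdvd : a * b ∣ n) (hf : f ∣ n) (hn : n = f + a + b)
    (hf1 : 1 ≤ f) : n = 6 ∧ a = 2 ∧ b = 3 := by
  have hb3 : 3 ≤ b := by
    by_contra h
    have ha2 : a = 2 := by omega
    have hb2 : b = 2 := by omega
    rw [ha2, hb2] at hco
    exact absurd hco (by decide)
  have hfab : f ∣ a + b := by
    have h1 : f ∣ f + (a + b) := by rw [← add_assoc, ← hn]; exact hf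
    exact (Nat.dvd_add_right (dvd_refl f)).mp h1
  have hfle : f ≤ a + b := Nat.le_of_dvd (by omega) hfab
  obtain ⟨k, hk⟩ := hdvd
  have hk1 : k = 1 := by
    rcases Nat.lt_or_ge k 2 with h | h
    · interval_cases k <;> nlinarith
    · nlinarith [mul_le_mul_right h (a*b)]
  subst hk1
  have ha4 : a ≤ 4 := by nlinarith
  have hb6 : b ≤ 6 := by
    rcases Nat.lt_or_ge a 3 with h2 | h3
    · have ha2 : a = 2 := by omega
      subst ha2
      have hf2 : f = b - 2 := by omega
      have h4 : f ∣ 4 := by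
        have h5 := Nat.dvd_sub hfab (dvd_refl f)
        have e : 2 + b - f = 4 := by omega
        rwa [e] at h5
      have := Nat.le_of_dvd (by norm_num) h4
      omega
    · nlinarith
  interval_cases a <;> interval_cases b <;>
    first
      | (exact absurd hco (by decide))
      | (have hfb := Nat.le_of_dvd (by norm_num) hfab; interval_cases f <;> omega)

theorem stmt_16 {G H : Type*} [Group G] [Group H] [Finite G] [Finite H]
    (α : G →* MulAut H) (hcard : Nat.card G = Nat.card H) (a b : H)
    (hne : orbitOf α a ≠ orbitOf α b)
    (ha : 1 < (orbitOf α a).ncard) (hb : 1 < (orbitOf α b).ncard)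
    (honly : ∀ c : H, 1 < (orbitOf α c).ncard →
      orbitOf α c = orbitOf α a ∨ orbitOf α c = orbitOf α b)
    (hco : Nat.Coprime (orbitOf α a).ncard (orbitOf α b).ncard) :
    Nat.card H = 6 ∧
      ((orbitOf α a).ncard = 2 ∧ (orbitOf α b).ncard = 3 ∨
        (orbitOf α a).ncard = 3 ∧ (orbitOf α b).ncard = 2) := by
  letI : MulDistribMulAction G H := MulDistribMulAction.compHom H α
  have horb : ∀ c : H, orbitOf α c = MulAction.orbit G c := fun c => rfl
  -- orbit cardinalities divide |H|
  have hdvd : ∀ c : H, (orbitOf α c).ncard ∣ Nat.card H := by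
    intro c
    have h1 : Nat.card (MulAction.orbit G c) * Nat.card (MulAction.stabilizer G c)
        = Nat.card G := by
      rw [← Nat.card_prod]
      exact Nat.card_congr (MulAction.orbitProdStabilizerEquivGroup G c)
    rw [hcard] at h1
    refine ⟨Nat.card (MulAction.stabilizer G c), ?_⟩
    rw [horb c, ← Nat.card_coe_set_eq]
    exact h1.symm
  -- fixed points
  set F : Set H := MulAction.fixedPoints G H with hF
  have hself : ∀ c : H, c ∈ orbitOf α c := fun c => ⟨1, by simp⟩
  have hfin : ∀ s : Set H, s.Finite := fun s => Set.toFinite s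
  have hfix_orb : ∀ c : H, c ∈ F → orbitOf α c = {c} := by
    intro c hc
    ext x
    simp only [Set.mem_singleton_iff]
    constructor
    · rintro ⟨g, rfl⟩
      exact hc g
    · rintro rfl
      exact hself _
  have hnotfix : ∀ c : H, c ∉ F → 1 < (orbitOf α c).ncard := by
    intro c hc
    by_contra h
    push_neg at h
    have hpos : 0 < (orbitOf α c).ncard := by
      rw [Set.ncard_pos]; exact ⟨c, hself c⟩
    have h1 : (orbitOf α c).ncard = 1 := by omega
    obtain ⟨x, hx⟩ := Set.ncard_eq_one.mp h1
    have hcx : c = x := by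
      have := hself c
      rw [hx] at this
      exact this
    apply hc
    intro g
    have : (g • c) ∈ orbitOf α c := ⟨g, rfl⟩
    rw [hx, ← hcx] at this
    exact this
  -- orbit equality from membership
  have horbeq : ∀ c d : H, c ∈ orbitOf α d → orbitOf α c = orbitOf α d := by
    intro c d hcd
    rw [horb c, horb d]
    exact MulAction.orbit_eq_iff.mpr (by rwa [horb d] at hcd)
  -- partition
  have hcover : ∀ c : H, c ∈ F ∨ c ∈ orbitOf α a ∨ c ∈ orbitOf α b := by
    intro c
    by_cases hc : c ∈ F
    · exact Or.inl hc
    · rcases honly c (hnotfix c hc) with h | h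
      · exact Or.inr (Or.inl (h ▸ hself c))
      · exact Or.inr (Or.inr (h ▸ hself c))
  have hdisjFA : ∀ c : H, c ∈ F → c ∉ orbitOf α a := by
    intro c hcF hcA
    have h1 := horbeq c a hcA
    have h2 := hfix_orb c hcF
    rw [h1] at h2
    rw [h2] at ha
    simp [Set.ncard_singleton] at ha
  have hdisjFB : ∀ c : H, c ∈ F → c ∉ orbitOf α b := by
    intro c hcF hcB
    have h1 := horbeq c b hcB
    have h2 := hfix_orb c hcF
    rw [h1] at h2
    rw [h2] at hb
    simp [Set.ncard_singleton] at hb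
  have hdisjAB : ∀ c : H, c ∈ orbitOf α a → c ∉ orbitOf α b := by
    intro c hcA hcB
    exact hne ((horbeq c a hcA).symm.trans (horbeq c b hcB))
  -- counting
  have huniv : (Set.univ : Set H) = F ∪ (orbitOf α a ∪ orbitOf α b) := by
    ext c
    simp only [Set.mem_univ, true_iff, Set.mem_union]
    rcases hcover c with h | h | h
    · exact Or.inl h
    · exact Or.inr (Or.inl h)
    · exact Or.inr (Or.inr h)
  have hcount : Nat.card H = F.ncard + ((orbitOf α a).ncard + (orbitOf α b).ncard) := by
    rw [← Set.ncard_univ, huniv]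
    rw [Set.ncard_union_eq ?d1 (hfin _) (hfin _), Set.ncard_union_eq ?d2 (hfin _) (hfin _)]
    case d1 =>
      rw [Set.disjoint_left]
      intro c hc hc'
      rcases hc' with h | h
      · exact hdisjFA c hc h
      · exact hdisjFB c hc h
    case d2 =>
      rw [Set.disjoint_left]
      exact hdisjAB
  -- fixed points form a subgroup, so its cardinality divides |H|
  have hFdvd : F.ncard ∣ Nat.card H := by
    have h1 : Nat.card (FixedPoints.subgroup G H) ∣ Nat.card H :=
      Subgroup.card_subgroup_dvd_card _
    have h2 : Nat.card (FixedPoints.subgroup G H) = F.ncard := by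
      rw [← Nat.card_coe_set_eq]
      rfl
    rwa [h2] at h1
  have hF1 : 1 ≤ F.ncard := by
    have : (1 : H) ∈ F := fun g => smul_one g
    have h2 : 0 < F.ncard := by rw [Set.ncard_pos]; exact ⟨(1 : H), this⟩
    omega
  have habdvd : (orbitOf α a).ncard * (orbitOf α b).ncard ∣ Nat.card H :=
    Nat.Coprime.mul_dvd_of_dvd_of_dvd hco (hdvd a) (hdvd b)
  rcases le_total (orbitOf α a).ncard (orbitOf α b).ncard with hle | hle
  · obtain ⟨h6, h2, h3⟩ := arith_aux _ _ _ _ ha hb hle hco habdvd hFdvd (by omega) hF1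
    exact ⟨h6, Or.inl ⟨h2, h3⟩⟩
  · obtain ⟨h6, h2, h3⟩ := arith_aux _ _ _ _ hb ha hle hco.symm
      (by rwa [mul_comm] at habdvd) hFdvd (by omega) hF1
    exact ⟨h6, Or.inr ⟨h3, h2⟩⟩
end

section
/- Let H be a group, F a subgroup of H of index 2, and x ∈ H with x ∉ F. Let Aut_F(H) = {φ ∈ Aut(H) : φ(f) = f for all f ∈ F}, a subgroup of Aut(H). Then for every φ ∈ Aut_F(H) the element x⁻¹·φ(x) lies in F, and the map h : Aut_F(H) → F defined by h(φ) = x⁻¹·φ(x) is an injective group homomorphism. -/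
/-- The subgroup of `MulAut H` of automorphisms fixing the subgroup `F` pointwise. -/
def autFix {H : Type*} [Group H] (F : Subgroup H) : Subgroup (MulAut H) where
  carrier := {φ : MulAut H | ∀ f ∈ F, φ f = f}
  one_mem' := fun f _ => rfl
  mul_mem' := fun {φ ψ} hφ hψ f hf => by
    simp only [MulAut.mul_apply, hψ f hf, hφ f hf]
  inv_mem' := fun {φ} hφ f hf => by
    have : φ ((φ⁻¹ : MulAut H) f) = φ f := by
      rw [hφ f hf]
      exact φ.apply_symm_apply f
    exact φ.injective (by rw [this, hφ f hf])

theorem stmt_17 {H : Type*} [Group H] (F : Subgroup H) (hF : F.index = 2)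
    (x : H) (hx : x ∉ F) :
    (∀ φ : autFix F, x⁻¹ * (φ : MulAut H) x ∈ F) ∧
    ∃ h : autFix F →* F, Function.Injective h ∧
      ∀ φ : autFix F, (h φ : H) = x⁻¹ * (φ : MulAut H) x := by
  have key : ∀ φ : autFix F, x⁻¹ * (φ : MulAut H) x ∈ F := by
    rintro ⟨φ, hφ⟩
    have hφx : (φ : MulAut H) x ∉ F := by
      intro hmem
      have h2 : (φ : MulAut H) x = x := φ.injective (hφ _ hmem)
      exact hx (h2 ▸ hmem)
    rw [Subgroup.mul_mem_iff_of_index_two hF]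
    exact iff_of_false (fun h => hx ((Subgroup.inv_mem_iff F).mp h)) hφx
  refine ⟨key, ?_⟩
  refine ⟨{ toFun := fun φ => ⟨x⁻¹ * (φ : MulAut H) x, key φ⟩
            map_one' := by ext; simp
            map_mul' := by
              rintro ⟨φ, hφ⟩ ⟨ψ, hψ⟩
              ext
              have : φ (x⁻¹ * ψ x) = x⁻¹ * ψ x := hφ _ (key ⟨ψ, hψ⟩)
              push_cast
              calc x⁻¹ * (φ * ψ : MulAut H) x
                  = x⁻¹ * φ (x * (x⁻¹ * ψ x)) := by
                    simp [MulAut.mul_apply, mul_assoc]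
                _ = (x⁻¹ * φ x) * (x⁻¹ * ψ x) := by
                    rw [map_mul, this]; group }, ?_, fun φ => rfl⟩
  rintro ⟨φ, hφ⟩ ⟨ψ, hψ⟩ heq
  have h1 : x⁻¹ * φ x = x⁻¹ * ψ x := congrArg Subtype.val heq
  have hx1 : φ x = ψ x := by
    have := mul_left_cancel h1; exact this
  -- φ and ψ agree on F and on x, hence everywhere
  ext y
  by_cases hy : y ∈ F
  · rw [hφ y hy, hψ y hy]
  · have hyx : y * x⁻¹ ∈ F := by
      rw [Subgroup.mul_mem_iff_of_index_two hF]
      exact iff_of_false hy (fun h => hx ((Subgroup.inv_mem_iff F).mp h))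
    have hy2 : y = (y * x⁻¹) * x := by group
    show φ y = ψ y
    rw [hy2, map_mul φ (y * x⁻¹) x, map_mul ψ (y * x⁻¹) x, hφ _ hyx, hψ _ hyx, hx1]
end
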